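/- arXiv:2011.07789 — 4 statements merged into one kernel-verified Lean document; each statement's English description precedes it below -/
import Mathlib

section
/- Let X be a real Banach space, κ ∈ (0,1), z₀ ∈ X, u : Q → X continuous, and Θⱼ : X → X maps for j = 1,…,m. Suppose z ∈ IC(Q;X) is continuously differentiable on [0,τ₁] and on each interval (τⱼ,τⱼ₊₁] (j = 1,…,m), with its piecewise derivative ż bounded and integrable on (0,T); that z(0) = z₀ and z(τⱼ⁺) − z(τⱼ⁻) = Θⱼ(z(τⱼ⁻)) for each j = 1,…,m; and that for every t ∈ Q with t ∉ {τ₁,…,τ_m}, (1/Γ(1−κ)) ∫₀^t (t−s)^{−κ} ż(s) ds = u(t). Then for each j = 0,1,…,m and every t ∈ (τⱼ, τⱼ₊₁], z(t) = z₀ + Σ_{i=1}^{j} Θᵢ(z(τᵢ⁻)) + (1/Γ(κ)) ∫₀^t (t−s)^{κ−1} u(s) ds. -/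
open MeasureTheory intervalIntegral Set Filter

/-- `IC T m τ x` : `x` belongs to the space `IC(Q;X)` of piecewise continuous functions on
`Q = [0,T]` with possible jumps at the impulse times `τ 1, …, τ m`: it is continuous (within
`Q`) at every non-impulse point, has one-sided limits at each impulse time `τ j`, and is
left-continuous there (`x (τ j) = x (τ j⁻)`). -/
def IC {X : Type*} [NormedAddCommGroup X] (T : ℝ) (m : ℕ) (τ : ℕ → ℝ) (x : ℝ → X) : Prop :=
  (∀ t ∈ Set.Icc (0:ℝ) T, (∀ j, 1 ≤ j → j ≤ m → t ≠ τ j) →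
      ContinuousWithinAt x (Set.Icc 0 T) t) ∧
  (∀ j, 1 ≤ j → j ≤ m →
      (Filter.Tendsto x (nhdsWithin (τ j) (Set.Iio (τ j))) (nhds (x (τ j))) ∧
       ∃ L, Filter.Tendsto x (nhdsWithin (τ j) (Set.Ioi (τ j))) (nhds L)))


lemma beta_real {κ : ℝ} (hκ : κ ∈ Set.Ioo (0:ℝ) 1) :
    ∫ x in (0:ℝ)..1, x ^ (-κ) * (1 - x) ^ (κ - 1) = Real.Gamma (1 - κ) * Real.Gamma κ := by
  obtain ⟨h0, h1⟩ := hκ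
  have hB : Complex.Gamma (1 - (κ:ℂ)) * Complex.Gamma (κ:ℂ)
      = Complex.Gamma ((1 - (κ:ℂ)) + κ) * Complex.betaIntegral (1 - (κ:ℂ)) κ := by
    apply Complex.Gamma_mul_Gamma_eq_betaIntegral <;>
      simp [Complex.sub_re, Complex.one_re, Complex.ofReal_re] <;> linarith
  have h2 : ((1 - (κ:ℂ)) + κ) = 1 := by ring
  rw [h2, Complex.Gamma_one, one_mul] at hB
  have h3 : Complex.betaIntegral (1 - (κ:ℂ)) κ
      = ((∫ x in (0:ℝ)..1, x ^ (-κ) * (1 - x) ^ (κ - 1) : ℝ) : ℂ) := by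
    rw [Complex.betaIntegral, ← intervalIntegral.integral_ofReal]
    apply intervalIntegral.integral_congr
    intro x hx
    rw [Set.uIcc_of_le (by norm_num : (0:ℝ) ≤ 1)] at hx
    push_cast
    rw [Complex.ofReal_cpow hx.1, Complex.ofReal_cpow (by linarith [hx.2])]
    push_cast
    ring_nf
  rw [h3] at hB
  have h4 : ((Real.Gamma (1 - κ) * Real.Gamma κ : ℝ) : ℂ)
      = ((∫ x in (0:ℝ)..1, x ^ (-κ) * (1 - x) ^ (κ - 1) : ℝ) : ℂ) := by
    push_cast
    rw [← Complex.Gamma_ofReal, ← Complex.Gamma_ofReal, ← hB]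
    push_cast
    ring
  exact_mod_cast h4.symm

lemma kernel_eval {κ : ℝ} (hκ : κ ∈ Set.Ioo (0:ℝ) 1) {r t : ℝ} (hrt : r < t) :
    ∫ s in r..t, (t - s) ^ (κ - 1) * (s - r) ^ (-κ)
      = Real.Gamma (1 - κ) * Real.Gamma κ := by
  obtain ⟨h0, h1⟩ := hκ
  set c := t - r with hc_def
  have hc : 0 < c := by simp [hc_def]; linarith
  have step1 : ∫ s in r..t, (t - s) ^ (κ - 1) * (s - r) ^ (-κ)
      = ∫ y in (0:ℝ)..c, (c - y) ^ (κ - 1) * y ^ (-κ) := by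
    have h := intervalIntegral.integral_comp_sub_right
      (fun y => (c - y) ^ (κ - 1) * y ^ (-κ)) r (a := r) (b := t)
    rw [show r - r = (0:ℝ) by ring, show t - r = c from rfl] at h
    rw [← h]
    apply intervalIntegral.integral_congr
    intro s _
    simp only
    congr 2
    ring
  have hmul := intervalIntegral.integral_comp_mul_right
    (fun y => (c - y) ^ (κ - 1) * y ^ (-κ)) (ne_of_gt hc) (a := 0) (b := 1)
  simp only [zero_mul, one_mul] at hmul
  have step2 : ∫ x in (0:ℝ)..1, (c - x * c) ^ (κ - 1) * (x * c) ^ (-κ)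
      = c⁻¹ * ∫ x in (0:ℝ)..1, x ^ (-κ) * (1 - x) ^ (κ - 1) := by
    rw [← intervalIntegral.integral_const_mul]
    apply intervalIntegral.integral_congr
    intro x hx
    rw [Set.uIcc_of_le (by norm_num : (0:ℝ) ≤ 1)] at hx
    simp only
    rw [show c - x * c = c * (1 - x) by ring, show x * c = c * x by ring,
      Real.mul_rpow hc.le (by linarith [hx.2]), Real.mul_rpow hc.le hx.1]
    have : c ^ (κ - 1) * c ^ (-κ) = c⁻¹ := by
      rw [← Real.rpow_add hc, show κ - 1 + -κ = -1 by ring, Real.rpow_neg_one]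
    calc c ^ (κ - 1) * (1 - x) ^ (κ - 1) * (c ^ (-κ) * x ^ (-κ))
        = (c ^ (κ - 1) * c ^ (-κ)) * (x ^ (-κ) * (1 - x) ^ (κ - 1)) := by ring
      _ = c⁻¹ * (x ^ (-κ) * (1 - x) ^ (κ - 1)) := by rw [this]
  rw [step2] at hmul
  rw [step1]
  have hmul' : c⁻¹ * (∫ x in (0:ℝ)..1, x ^ (-κ) * (1 - x) ^ (κ - 1))
      = c⁻¹ * ∫ y in (0:ℝ)..c, (c - y) ^ (κ - 1) * y ^ (-κ) := by
    rw [hmul, smul_eq_mul]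
  have := mul_left_cancel₀ (inv_ne_zero (ne_of_gt hc)) hmul'
  rw [← this, beta_real ⟨h0, h1⟩]

lemma II_rpow_sub {e : ℝ} (h : (-1:ℝ) < e) (s a b : ℝ) :
    IntervalIntegrable (fun r => (s - r) ^ e) volume a b := by
  simpa using (intervalIntegral.intervalIntegrable_rpow' h
    (a := s - a) (b := s - b)).comp_sub_left s

lemma int_rpow_sub {e : ℝ} (h : (-1:ℝ) < e) {s : ℝ} (hs : 0 ≤ s) :
    ∫ r in (0:ℝ)..s, (s - r) ^ e = s ^ (e + 1) / (e + 1) := by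
  rw [intervalIntegral.integral_comp_sub_left (fun y => y ^ e) s]
  simp only [sub_self, sub_zero]
  rw [integral_rpow (Or.inl h), Real.zero_rpow (by linarith : e + 1 ≠ 0), sub_zero]

section FTC
variable {X : Type*} [NormedAddCommGroup X] [NormedSpace ℝ X] [CompleteSpace X]

lemma ftc_Icc {z zd : ℝ → X} {a b : ℝ} (hab : a ≤ b)
    (hd : ∀ s ∈ Set.Icc a b, HasDerivWithinAt z (zd s) (Set.Icc a b) s)
    (hint : IntervalIntegrable zd volume a b) :
    ∫ s in a..b, zd s = z b - z a := by
  apply intervalIntegral.integral_eq_sub_of_hasDeriv_right_of_le hab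
    (fun s hs => (hd s hs).continuousWithinAt) _ hint
  intro s hs
  exact ((hd s (Set.Ioo_subset_Icc_self hs)).hasDerivAt
    (Icc_mem_nhds hs.1 hs.2)).hasDerivWithinAt

lemma ftc_Ioc {z zd : ℝ → X} {a b : ℝ} (hab : a < b) {L : X}
    (hd : ∀ s ∈ Set.Ioc a b, HasDerivWithinAt z (zd s) (Set.Ioc a b) s)
    (hL : Filter.Tendsto z (nhdsWithin a (Set.Ioi a)) (nhds L))
    (hint : IntervalIntegrable zd volume a b) :
    ∫ s in a..b, zd s = z b - L := by
  set f := Function.update z a L with hf_def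
  have hfz : ∀ s ∈ Set.Ioc a b, f s = z s := fun s hs =>
    Function.update_of_ne (ne_of_gt hs.1) _ _
  have hcont : ContinuousOn f (Set.Icc a b) := by
    intro x hx
    rcases eq_or_lt_of_le hx.1 with heq | hlt
    · subst heq
      rw [← Set.Ioc_insert_left hab.le, continuousWithinAt_insert_self]
      have h2 : Filter.Tendsto f (nhdsWithin a (Set.Ioc a b)) (nhds L) := by
        apply Filter.Tendsto.congr' _
          (hL.mono_left (nhdsWithin_mono a Set.Ioc_subset_Ioi_self))
        filter_upwards [self_mem_nhdsWithin] with s hs using (hfz s hs).symm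
      have hfx : f a = L := Function.update_self _ _ _
      rw [ContinuousWithinAt, hfx]
      exact h2
    · have hx' : x ∈ Set.Ioc a b := ⟨hlt, hx.2⟩
      have hzc : ContinuousWithinAt z (Set.Ioc a b) x := (hd x hx').continuousWithinAt
      have hfc : ContinuousWithinAt f (Set.Ioc a b) x := hzc.congr hfz (hfz x hx')
      rw [← Set.Ioc_insert_left hab.le]
      exact hfc.insert'
  have hderiv : ∀ x ∈ Set.Ioo a b, HasDerivWithinAt f (zd x) (Set.Ioi x) x := by
    intro x hx
    have hx' : x ∈ Set.Ioc a b := ⟨hx.1, hx.2.le⟩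
    have h1 : HasDerivAt z (zd x) x := (hd x hx').hasDerivAt (Ioc_mem_nhds hx.1 hx.2)
    have h2 : HasDerivAt f (zd x) x := by
      apply h1.congr_of_eventuallyEq
      filter_upwards [eventually_ne_nhds (ne_of_gt hx.1)] with s hs using
        Function.update_of_ne hs _ _
    exact h2.hasDerivWithinAt
  rw [intervalIntegral.integral_eq_sub_of_hasDeriv_right_of_le hab.le hcont hderiv hint]
  simp only [hf_def]
  rw [Function.update_of_ne (ne_of_gt hab), Function.update_self]

end FTC

set_option maxHeartbeats 1000000 in
lemma fubini_frac {X : Type*} [NormedAddCommGroup X] [NormedSpace ℝ X] [CompleteSpace X]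
    {κ : ℝ} (hκ : κ ∈ Set.Ioo (0:ℝ) 1) {t : ℝ} (ht : 0 < t)
    {zd : ℝ → X} (hsm : AEStronglyMeasurable zd (volume.restrict (Set.Ioc 0 t)))
    {C : ℝ} (hC : 0 ≤ C)
    (hbd : ∀ᵐ r ∂(volume.restrict (Set.Ioc (0:ℝ) t)), ‖zd r‖ ≤ C) :
    ∫ s in Set.Ioc (0:ℝ) t,
        ((t - s) ^ (κ - 1) : ℝ) • (∫ r in (0:ℝ)..s, ((s - r) ^ (-κ) : ℝ) • zd r)
      = (Real.Gamma (1 - κ) * Real.Gamma κ) • ∫ s in Set.Ioc (0:ℝ) t, zd s := by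
  obtain ⟨hκ0, hκ1⟩ := hκ
  set μ := volume.restrict (Set.Ioc (0:ℝ) t) with hμ
  set k : ℝ → ℝ → ℝ := fun s r => (t - s) ^ (κ - 1) * (s - r) ^ (-κ) with hk
  set F : ℝ → ℝ → X := fun s r => if r ≤ s then k s r • zd r else 0 with hF
  have hkm2 : Measurable fun p : ℝ × ℝ => (t - p.1) ^ (κ - 1) * (p.1 - p.2) ^ (-κ) := by
    measurability
  have hkms : ∀ s : ℝ, Measurable fun r : ℝ => (t - s) ^ (κ - 1) * (s - r) ^ (-κ) := by
    intro s
    exact hkm2.comp (measurable_const.prodMk measurable_id)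
  have hkm : Measurable fun p : ℝ × ℝ => k p.1 p.2 := hkm2
  have hG : AEStronglyMeasurable (fun p : ℝ × ℝ => k p.1 p.2 • zd p.2) (μ.prod μ) :=
    hkm.aestronglyMeasurable.smul hsm.comp_snd
  have hFsm : AEStronglyMeasurable (Function.uncurry F) (μ.prod μ) := by
    have hset : MeasurableSet {p : ℝ × ℝ | p.2 ≤ p.1} :=
      measurableSet_le measurable_snd measurable_fst
    have heq : Function.uncurry F
        = Set.indicator {p : ℝ × ℝ | p.2 ≤ p.1} (fun p => k p.1 p.2 • zd p.2) := by
      ext p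
      by_cases h : p.2 ≤ p.1 <;>
        simp [Function.uncurry, hF, Set.indicator_apply, h]
    rw [heq]
    exact hG.indicator hset
  have hkint : ∀ s : ℝ, 0 ≤ s → IntegrableOn (fun r => (s - r) ^ (-κ)) (Set.Ioc 0 s) volume := by
    intro s hs
    rw [← intervalIntegrable_iff_integrableOn_Ioc_of_le hs]
    exact II_rpow_sub (by linarith) s 0 s
  -- integrability of the slice on `Ioc 0 s`
  have hsliceIoc : ∀ s ∈ Set.Ioc (0:ℝ) t,
      Integrable (fun r => k s r • zd r) (volume.restrict (Set.Ioc 0 s)) := by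
    intro s hs
    apply Integrable.mono' (((hkint s hs.1.le).const_mul ((t - s) ^ (κ - 1))).const_mul C)
    · exact ((hkms s).aestronglyMeasurable).smul
        (hsm.mono_measure (Measure.restrict_mono (Set.Ioc_subset_Ioc_right hs.2) le_rfl))
    · filter_upwards [ae_restrict_mem measurableSet_Ioc,
        hbd.filter_mono (ae_mono (Measure.restrict_mono (Set.Ioc_subset_Ioc_right hs.2) le_rfl))]
        with r hr hbr
      have hknn : 0 ≤ k s r := mul_nonneg (Real.rpow_nonneg (by linarith [hs.2]) _)
        (Real.rpow_nonneg (by linarith [hr.2]) _)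
      rw [norm_smul, Real.norm_eq_abs, abs_of_nonneg hknn]
      calc k s r * ‖zd r‖ ≤ k s r * C := mul_le_mul_of_nonneg_left hbr hknn
        _ = C * ((t - s) ^ (κ - 1) * (s - r) ^ (-κ)) := by rw [hk]; ring
  have hindic : ∀ s : ℝ, (fun r => F s r)
      = Set.indicator (Set.Iic s) (fun r => k s r • zd r) := by
    intro s; ext r
    by_cases h : r ≤ s <;> simp [hF, Set.indicator_apply, h, Set.mem_Iic]
  have hslice : ∀ s ∈ Set.Ioc (0:ℝ) t, Integrable (fun r => F s r) μ := by
    intro s hs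
    rw [hindic s, hμ, integrable_indicator_iff measurableSet_Iic, IntegrableOn,
      Measure.restrict_restrict measurableSet_Iic, Set.Iic_inter_Ioc_of_le hs.2]
    exact hsliceIoc s hs
  -- the inner ∫‖·‖ as a function of `s` is integrable
  have hval : ∀ s ∈ Set.Ioc (0:ℝ) t,
      ∫ r in Set.Ioc (0:ℝ) s, (s - r) ^ (-κ) = s ^ (1 - κ) / (1 - κ) := by
    intro s hs
    rw [← intervalIntegral.integral_of_le hs.1.le, int_rpow_sub (by linarith) hs.1.le,
      show -κ + 1 = 1 - κ by ring]
  have hnormint : Integrable (fun s => ∫ r, ‖F s r‖ ∂μ) μ := by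
    have hmeas : AEStronglyMeasurable (fun s => ∫ r, ‖F s r‖ ∂μ) μ := by
      have := hFsm.norm.integral_prod_right'
      simpa [Function.uncurry] using this
    have hgint : Integrable (fun s => (C * t ^ (1 - κ) / (1 - κ)) * (t - s) ^ (κ - 1)) μ := by
      rw [hμ]
      exact (((intervalIntegrable_iff_integrableOn_Ioc_of_le ht.le).1
        (II_rpow_sub (by linarith) t 0 t))).const_mul _
    apply Integrable.mono' hgint hmeas
    filter_upwards [ae_restrict_mem measurableSet_Ioc] with s hs
    rw [Real.norm_of_nonneg (integral_nonneg fun r => norm_nonneg _)]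
    have h1 : ∫ r, ‖F s r‖ ∂μ = ∫ r in Set.Ioc (0:ℝ) s, ‖k s r • zd r‖ := by
      have h0 : (fun r => ‖F s r‖) = Set.indicator (Set.Iic s) fun r => ‖k s r • zd r‖ := by
        ext r
        by_cases h : r ≤ s <;> simp [hF, Set.indicator_apply, h, Set.mem_Iic]
      rw [h0, hμ, MeasureTheory.integral_indicator measurableSet_Iic,
        Measure.restrict_restrict measurableSet_Iic, Set.Iic_inter_Ioc_of_le hs.2]
    have h2 : ∫ r in Set.Ioc (0:ℝ) s, ‖k s r • zd r‖
        ≤ ∫ r in Set.Ioc (0:ℝ) s, C * ((t - s) ^ (κ - 1) * (s - r) ^ (-κ)) := by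
      apply integral_mono_ae (hsliceIoc s hs).norm
        (((hkint s hs.1.le).const_mul ((t - s) ^ (κ - 1))).const_mul C)
      filter_upwards [ae_restrict_mem measurableSet_Ioc,
        hbd.filter_mono (ae_mono (Measure.restrict_mono (Set.Ioc_subset_Ioc_right hs.2) le_rfl))]
        with r hr hbr
      have hknn : 0 ≤ k s r := mul_nonneg (Real.rpow_nonneg (by linarith [hs.2]) _)
        (Real.rpow_nonneg (by linarith [hr.2]) _)
      rw [norm_smul, Real.norm_eq_abs, abs_of_nonneg hknn]
      calc k s r * ‖zd r‖ ≤ k s r * C := mul_le_mul_of_nonneg_left hbr hknn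
        _ = C * ((t - s) ^ (κ - 1) * (s - r) ^ (-κ)) := by rw [hk]; ring
    have h3 : ∫ r in Set.Ioc (0:ℝ) s, C * ((t - s) ^ (κ - 1) * (s - r) ^ (-κ))
        = C * ((t - s) ^ (κ - 1) * (s ^ (1 - κ) / (1 - κ))) := by
      rw [MeasureTheory.integral_const_mul, MeasureTheory.integral_const_mul, hval s hs]
    have h4 : C * ((t - s) ^ (κ - 1) * (s ^ (1 - κ) / (1 - κ)))
        ≤ (C * t ^ (1 - κ) / (1 - κ)) * (t - s) ^ (κ - 1) := by
      rw [show (C * t ^ (1 - κ) / (1 - κ)) * (t - s) ^ (κ - 1)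
        = C * ((t - s) ^ (κ - 1) * (t ^ (1 - κ) / (1 - κ))) by ring]
      have hA : 0 ≤ (t - s) ^ (κ - 1) := Real.rpow_nonneg (by linarith [hs.2]) _
      have hsle : s ^ (1 - κ) ≤ t ^ (1 - κ) :=
        Real.rpow_le_rpow hs.1.le hs.2 (by linarith)
      have h5 : s ^ (1 - κ) / (1 - κ) ≤ t ^ (1 - κ) / (1 - κ) :=
        (div_le_div_iff_of_pos_right (by linarith : (0:ℝ) < 1 - κ)).2 hsle
      exact mul_le_mul_of_nonneg_left (mul_le_mul_of_nonneg_left h5 hA) hC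
    rw [h1]
    exact (h2.trans_eq h3).trans h4
  have hFprod : Integrable (Function.uncurry F) (μ.prod μ) := by
    rw [integrable_prod_iff hFsm]
    constructor
    · filter_upwards [ae_restrict_mem measurableSet_Ioc] with s hs
      simpa [Function.uncurry] using hslice s hs
    · simpa [Function.uncurry] using hnormint
  have hswap := integral_integral_swap hFprod
  have hL : ∫ s, (∫ r, F s r ∂μ) ∂μ
      = ∫ s in Set.Ioc (0:ℝ) t,
          ((t - s) ^ (κ - 1) : ℝ) • (∫ r in (0:ℝ)..s, ((s - r) ^ (-κ) : ℝ) • zd r) := by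
    apply setIntegral_congr_fun measurableSet_Ioc
    intro s hs
    show (∫ r, F s r ∂μ)
      = ((t - s) ^ (κ - 1) : ℝ) • ∫ r in (0:ℝ)..s, ((s - r) ^ (-κ) : ℝ) • zd r
    rw [hindic s, hμ, MeasureTheory.integral_indicator measurableSet_Iic,
      Measure.restrict_restrict measurableSet_Iic, Set.Iic_inter_Ioc_of_le hs.2,
      intervalIntegral.integral_of_le hs.1.le, ← MeasureTheory.integral_smul]
    simp only [hk, smul_smul]
  have hR : ∫ r, (∫ s, F s r ∂μ) ∂μ
      = (Real.Gamma (1 - κ) * Real.Gamma κ) • ∫ s in Set.Ioc (0:ℝ) t, zd s := by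
    rw [← MeasureTheory.integral_smul]
    apply MeasureTheory.integral_congr_ae
    have hne : ∀ᵐ r ∂μ, r ≠ t := by
      rw [hμ, ae_iff]
      refine measure_mono_null (fun x hx => ?_) (measure_singleton t)
      simpa using hx
    filter_upwards [ae_restrict_mem measurableSet_Ioc, hne] with r hr hrt
    show (∫ s, F s r ∂μ) = (Real.Gamma (1 - κ) * Real.Gamma κ) • zd r
    have hrt' : r < t := lt_of_le_of_ne hr.2 hrt
    have h1 : (fun s => F s r) = Set.indicator (Set.Ici r) (fun s => k s r • zd r) := by
      ext s
      by_cases h : r ≤ s <;> simp [hF, Set.indicator_apply, h, Set.mem_Ici]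
    have h2 : Set.Ici r ∩ Set.Ioc 0 t = Set.Icc r t := by
      ext x
      simp only [Set.mem_inter_iff, Set.mem_Ici, Set.mem_Ioc, Set.mem_Icc]
      exact ⟨fun ⟨a, _, c⟩ => ⟨a, c⟩, fun ⟨a, c⟩ => ⟨a, lt_of_lt_of_le hr.1 a, c⟩⟩
    rw [h1, hμ, MeasureTheory.integral_indicator measurableSet_Ici,
      Measure.restrict_restrict measurableSet_Ici, h2, integral_Icc_eq_integral_Ioc,
      ← intervalIntegral.integral_of_le hrt'.le, intervalIntegral.integral_smul_const]
    simp only [hk]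
    rw [kernel_eval ⟨hκ0, hκ1⟩ hrt']
  rw [← hL, ← hR]
  simpa [Function.uncurry] using hswap

/-- A piecewise `C¹` function in `IC(Q;X)` whose Caputo fractional derivative
(computed with the piecewise derivative `zd`) equals `u` off the impulse times, with initial
value `z₀` and jumps `Θ j` at the impulse times, is given on each interval `(τ j, τ (j+1)]`
by the impulsive fractional integral formula. -/
theorem statement_1
    {X : Type*} [NormedAddCommGroup X] [NormedSpace ℝ X] [CompleteSpace X]
    (T : ℝ) (hT : 0 < T) (m : ℕ) (τ : ℕ → ℝ)
    (hτ0 : τ 0 = 0) (hτT : τ (m+1) = T) (hτmono : ∀ j ≤ m, τ j < τ (j+1))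
    (κ : ℝ) (hκ : κ ∈ Set.Ioo (0:ℝ) 1)
    (z₀ : X) (u : ℝ → X) (hu : ContinuousOn u (Set.Icc 0 T))
    (Θ : ℕ → X → X)
    (z zd : ℝ → X) (hzIC : IC T m τ z)
    -- `z` is continuously differentiable on `[0, τ 1]` with derivative `zd`
    (hz0 : ∀ t ∈ Set.Icc (0:ℝ) (τ 1), HasDerivWithinAt z (zd t) (Set.Icc 0 (τ 1)) t)
    (hzd0 : ContinuousOn zd (Set.Icc 0 (τ 1)))
    -- `z` is continuously differentiable on each `(τ j, τ (j+1)]` with derivative `zd`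
    (hzj : ∀ j, 1 ≤ j → j ≤ m → ∀ t ∈ Set.Ioc (τ j) (τ (j+1)),
      HasDerivWithinAt z (zd t) (Set.Ioc (τ j) (τ (j+1))) t)
    (hzdj : ∀ j, 1 ≤ j → j ≤ m → ContinuousOn zd (Set.Ioc (τ j) (τ (j+1))))
    -- the piecewise derivative is bounded and integrable on `(0,T)`
    (hzdbdd : ∃ C, ∀ t ∈ Set.Ioo (0:ℝ) T, ‖zd t‖ ≤ C)
    (hzdint : IntervalIntegrable zd MeasureTheory.volume 0 T)
    -- initial condition
    (hz0v : z 0 = z₀)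
    -- impulsive jump conditions: `z (τ j ⁺) - z (τ j ⁻) = Θ j (z (τ j ⁻))`,
    -- where `z (τ j ⁻) = z (τ j)` since `z ∈ IC(Q;X)`
    (hjump : ∀ j, 1 ≤ j → j ≤ m →
      Filter.Tendsto z (nhdsWithin (τ j) (Set.Ioi (τ j))) (nhds (z (τ j) + Θ j (z (τ j)))))
    -- Caputo fractional differential equation off the impulse times
    (hCaputo : ∀ t ∈ Set.Icc (0:ℝ) T, (∀ j, 1 ≤ j → j ≤ m → t ≠ τ j) →
      (1 / Real.Gamma (1 - κ)) • ∫ s in (0:ℝ)..t, ((t - s) ^ (-κ) : ℝ) • zd s = u t) :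
    ∀ j ≤ m, ∀ t ∈ Set.Ioc (τ j) (τ (j+1)),
      z t = z₀ + (∑ i ∈ Finset.Icc 1 j, Θ i (z (τ i)))
        + (1 / Real.Gamma κ) • ∫ s in (0:ℝ)..t, ((t - s) ^ (κ - 1) : ℝ) • u s := by
  -- monotonicity facts for the impulse times
  have hτle : ∀ i k : ℕ, i ≤ k → k ≤ m + 1 → τ i ≤ τ k := by
    intro i k hik hkm
    induction k with
    | zero =>
      have : i = 0 := Nat.le_zero.1 hik
      subst this; exact le_rfl
    | succ n ih =>
      by_cases h : i = n + 1
      · subst h; exact le_rfl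
      · have hin : i ≤ n := by omega
        exact (ih hin (by omega)).trans (hτmono n (by omega)).le
  have hτnn : ∀ i : ℕ, i ≤ m + 1 → 0 ≤ τ i := fun i hi => hτ0 ▸ hτle 0 i (Nat.zero_le _) hi
  have hτleT : ∀ i : ℕ, i ≤ m + 1 → τ i ≤ T := fun i hi => hτT ▸ hτle i (m+1) hi le_rfl
  have hint' : ∀ a b : ℝ, 0 ≤ a → a ≤ T → 0 ≤ b → b ≤ T →
      IntervalIntegrable zd MeasureTheory.volume a b := by
    intro a b ha0 haT hb0 hbT
    apply hzdint.mono_set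
    apply Set.uIcc_subset_uIcc <;> rw [Set.uIcc_of_le hT.le]
    · exact ⟨ha0, haT⟩
    · exact ⟨hb0, hbT⟩
  -- Key fact A : the fundamental theorem of calculus with jumps
  have keyA : ∀ j, j ≤ m → ∀ t', t' ∈ Set.Ioc (τ j) (τ (j+1)) →
      ∫ s in (0:ℝ)..t', zd s = z t' - z₀ - ∑ i ∈ Finset.Icc 1 j, Θ i (z (τ i)) := by
    intro j
    induction j with
    | zero =>
      intro _ t' ht'
      rw [hτ0] at ht'
      have ht'le : t' ≤ τ 1 := ht'.2
      have h1 : ∫ s in (0:ℝ)..t', zd s = z t' - z 0 := by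
        apply ftc_Icc ht'.1.le
        · intro s hs
          exact (hz0 s ⟨hs.1, hs.2.trans ht'le⟩).mono (Set.Icc_subset_Icc_right ht'le)
        · exact hint' 0 t' le_rfl hT.le ht'.1.le (ht'le.trans (hτleT 1 (by omega)))
      rw [h1, hz0v, show Finset.Icc 1 0 = ∅ from Finset.Icc_eq_empty (by omega)]
      simp
    | succ n ih =>
      intro hnm t' ht'
      have hnm' : n ≤ m := Nat.le_of_succ_le hnm
      have h0 := ih hnm' (τ (n+1)) ⟨hτmono n hnm', le_rfl⟩
      have hτn0 : 0 ≤ τ (n+1) := hτnn (n+1) (by omega)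
      have hτnT : τ (n+1) ≤ T := hτleT (n+1) (by omega)
      have ht'0 : 0 ≤ t' := hτn0.trans ht'.1.le
      have ht'T : t' ≤ T := ht'.2.trans (hτleT (n+2) (by omega))
      have hpiece : ∫ s in τ (n+1)..t', zd s
          = z t' - (z (τ (n+1)) + Θ (n+1) (z (τ (n+1)))) := by
        apply ftc_Ioc ht'.1
        · intro s hs
          exact (hzj (n+1) (by omega) hnm s ⟨hs.1, hs.2.trans ht'.2⟩).mono
            (Set.Ioc_subset_Ioc_right ht'.2)
        · exact hjump (n+1) (by omega) hnm
        · exact hint' _ _ hτn0 hτnT ht'0 ht'T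
      have hsplit := intervalIntegral.integral_add_adjacent_intervals
        (hint' 0 (τ (n+1)) le_rfl hT.le hτn0 hτnT)
        (hint' (τ (n+1)) t' hτn0 hτnT ht'0 ht'T)
      rw [← hsplit, h0, hpiece, Finset.sum_Icc_succ_top (by omega : 1 ≤ n+1)]
      abel
  -- now the main argument
  intro j hjm t ht
  have ht0 : 0 < t := lt_of_le_of_lt (hτnn j (by omega)) ht.1
  have htT : t ≤ T := ht.2.trans (hτleT (j+1) (by omega))
  obtain ⟨C, hCb⟩ := hzdbdd
  have hC0 : 0 ≤ C := le_trans (norm_nonneg _) (hCb (T/2) ⟨by linarith, by linarith⟩)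
  have hsm : AEStronglyMeasurable zd (volume.restrict (Set.Ioc 0 t)) :=
    hzdint.1.aestronglyMeasurable.mono_measure
      (Measure.restrict_mono (Set.Ioc_subset_Ioc_right htT) le_rfl)
  have hbd : ∀ᵐ r ∂(volume.restrict (Set.Ioc (0:ℝ) t)), ‖zd r‖ ≤ C := by
    have hne : ∀ᵐ r ∂(volume.restrict (Set.Ioc (0:ℝ) t)), r ≠ T := by
      rw [ae_iff]
      have h1 : (volume.restrict (Set.Ioc (0:ℝ) t)) {T} = 0 := by
        rw [Measure.restrict_apply (measurableSet_singleton T)]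
        exact measure_mono_null Set.inter_subset_left (measure_singleton T)
      exact measure_mono_null (fun x hx => by simpa using hx) h1
    filter_upwards [ae_restrict_mem measurableSet_Ioc, hne] with r hr hrT
    exact hCb r ⟨hr.1, lt_of_le_of_ne (hr.2.trans htT) hrT⟩
  have hae : ∀ᵐ s ∂(volume.restrict (Set.Ioc (0:ℝ) t)), ∀ i, 1 ≤ i → i ≤ m → s ≠ τ i := by
    have h0 : MeasureTheory.volume (τ '' Set.Icc 1 m) = 0 :=
      ((Set.finite_Icc 1 m).image τ).measure_zero _
    apply Filter.Eventually.filter_mono (ae_mono Measure.restrict_le_self)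
    rw [ae_iff]
    apply measure_mono_null _ h0
    intro s hs
    simp only [Set.mem_setOf_eq, not_forall] at hs
    obtain ⟨i, h1, h2, h3⟩ := hs
    exact ⟨i, ⟨h1, h2⟩, (not_ne_iff.1 h3).symm⟩
  have hG1 : Real.Gamma κ ≠ 0 := ne_of_gt (Real.Gamma_pos_of_pos hκ.1)
  have hG2 : Real.Gamma (1 - κ) ≠ 0 :=
    ne_of_gt (Real.Gamma_pos_of_pos (by linarith [hκ.2]))
  have e2 : ∫ s in Set.Ioc (0:ℝ) t, ((t - s) ^ (κ - 1) : ℝ) • u s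
      = (1 / Real.Gamma (1 - κ)) • ∫ s in Set.Ioc (0:ℝ) t,
          ((t - s) ^ (κ - 1) : ℝ) • ∫ r in (0:ℝ)..s, ((s - r) ^ (-κ) : ℝ) • zd r := by
    rw [← MeasureTheory.integral_smul]
    apply MeasureTheory.integral_congr_ae
    filter_upwards [hae, ae_restrict_mem measurableSet_Ioc] with s hsne hs
    rw [← hCaputo s ⟨hs.1.le, hs.2.trans htT⟩ hsne, smul_comm]
  have final : (1 / Real.Gamma κ) • (∫ s in (0:ℝ)..t, ((t - s) ^ (κ - 1) : ℝ) • u s)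
      = z t - z₀ - ∑ i ∈ Finset.Icc 1 j, Θ i (z (τ i)) := by
    rw [intervalIntegral.integral_of_le ht0.le, e2,
      fubini_frac hκ ht0 hsm hC0 hbd, smul_smul, smul_smul,
      show (1 / Real.Gamma κ) * (1 / Real.Gamma (1 - κ))
        * (Real.Gamma (1 - κ) * Real.Gamma κ) = 1 by field_simp; try ring,
      one_smul, ← intervalIntegral.integral_of_le ht0.le]
    exact keyA j hjm t ht
  rw [final]
  abel
end

section
/- Let X be a real Banach space, κ ∈ (0,1), and k₁, k₂, d₁,…,d_m ≥ 0. Suppose z ∈ IC(Q;X) satisfies ‖z(t)‖ ≤ k₁ + k₂ ∫₀^t (t−s)^{κ−1} ‖z(s)‖ ds + Σ_{j : 0<τⱼ<t} dⱼ ‖z(τⱼ⁻)‖ for all t ∈ Q. Then, with D* = max{d₁,…,d_m} and E_κ the Mittag-Leffler function, for each j = 0,1,…,m and every t ∈ (τⱼ, τⱼ₊₁]: ‖z(t)‖ ≤ k₁ [1 + D* E_κ(k₂ Γ(κ) t^κ)]^j E_κ(k₂ Γ(κ) t^κ). -/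
open MeasureTheory intervalIntegral Set Filter

/-- The Mittag-Leffler function `E_κ(h) = ∑_{i=0}^∞ h^i / Γ(κ i + 1)`. -/
noncomputable def mittagLeffler (κ : ℝ) (h : ℝ) : ℝ :=
  ∑' i : ℕ, h ^ i / Real.Gamma (κ * i + 1)

section Helpers

lemma IntervalIntegrable.congr_Ioc {f g : ℝ → ℝ} {a b : ℝ} (hab : a ≤ b)
    (h : IntervalIntegrable f volume a b) (he : ∀ x ∈ Set.Ioc a b, f x = g x) :
    IntervalIntegrable g volume a b := by
  rw [intervalIntegrable_iff, uIoc_of_le hab] at h ⊢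
  exact h.congr ((ae_restrict_iff' measurableSet_Ioc).2 (ae_of_all _ he))

lemma Gamma_rpow_aux {κ x : ℝ} (hκ0 : 0 < κ) (hκ1 : κ < 1) (hx : 0 < x) :
    Real.Gamma (x + 1) ≤ Real.Gamma (x + κ) * (x + κ) ^ (1 - κ) := by
  have hxκ : 0 < x + κ := by linarith
  have hΓ : 0 < Real.Gamma (x + κ) := Real.Gamma_pos_of_pos hxκ
  have h := Real.Gamma_mul_add_mul_le_rpow_Gamma_mul_rpow_Gamma (s := x + κ) (t := x + κ + 1)
    (a := κ) (b := 1 - κ) hxκ (by linarith) hκ0 (by linarith) (by ring)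
  have harg : κ * (x + κ) + (1 - κ) * (x + κ + 1) = x + 1 := by ring
  rw [harg] at h
  have h2 : Real.Gamma (x + κ + 1) = (x + κ) * Real.Gamma (x + κ) :=
    Real.Gamma_add_one hxκ.ne'
  rw [h2] at h
  calc Real.Gamma (x + 1)
      ≤ Real.Gamma (x + κ) ^ κ * ((x + κ) * Real.Gamma (x + κ)) ^ (1 - κ) := h
    _ = Real.Gamma (x + κ) * (x + κ) ^ (1 - κ) := by
        rw [Real.mul_rpow hxκ.le hΓ.le,
          mul_comm ((x + κ) ^ (1 - κ)) (Real.Gamma (x + κ) ^ (1 - κ)), ← mul_assoc,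
          ← Real.rpow_add hΓ, show κ + (1 - κ) = (1:ℝ) by ring, Real.rpow_one]

lemma ML_summable {κ h : ℝ} (hκ0 : 0 < κ) (hκ1 : κ < 1) (hh : 0 ≤ h) :
    Summable (fun i : ℕ => h ^ i / Real.Gamma (κ * i + 1)) := by
  apply summable_of_ratio_norm_eventually_le (r := 1/2) (by norm_num)
  have hg : Tendsto (fun y : ℝ => (y + κ) ^ (1 - κ) / y) atTop (nhds 0) := by
    have ha : Tendsto (fun y : ℝ => y + κ) atTop atTop :=
      tendsto_atTop_add_const_right _ κ tendsto_id
    have hb : Tendsto (fun y : ℝ => (y + κ) ^ (-κ)) atTop (nhds 0) :=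
      (tendsto_rpow_neg_atTop hκ0).comp ha
    have h0 : Tendsto (fun y : ℝ => κ * y⁻¹) atTop (nhds 0) := by
      simpa using (tendsto_inv_atTop_zero (𝕜 := ℝ)).const_mul κ
    have hc : Tendsto (fun y : ℝ => 1 + κ / y) atTop (nhds 1) := by
      simpa [div_eq_mul_inv] using (tendsto_const_nhds (x := (1:ℝ))).add h0
    have hc' : Tendsto (fun y : ℝ => (y + κ) / y) atTop (nhds 1) := by
      refine hc.congr' ?_
      filter_upwards [eventually_gt_atTop (0:ℝ)] with y hy
      field_simp
    have h1 : Tendsto (fun y : ℝ => (y + κ) ^ (-κ) * ((y + κ) / y)) atTop (nhds 0) := by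
      simpa using hb.mul hc'
    refine h1.congr' ?_
    filter_upwards [eventually_gt_atTop (0:ℝ)] with y hy
    have hyκ : 0 < y + κ := by linarith
    rw [show (1:ℝ) - κ = -κ + 1 by ring, Real.rpow_add hyκ, Real.rpow_one]
    ring
  have hy : Tendsto (fun n : ℕ => κ * n + 1) atTop atTop := by
    apply tendsto_atTop_add_const_right
    exact (tendsto_natCast_atTop_atTop (R := ℝ)).const_mul_atTop hκ0
  have hf : Tendsto (fun n : ℕ => h * (((κ * n + 1) + κ) ^ (1 - κ) / (κ * n + 1)))
      atTop (nhds (h * 0)) := (hg.comp hy).const_mul h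
  rw [mul_zero] at hf
  filter_upwards [hf.eventually_lt_const (by norm_num : (0:ℝ) < 1/2)] with n hn
  set x : ℝ := κ * n + 1 with hxdef
  have hx : 0 < x := by positivity
  have hxκ : 0 < x + κ := by linarith
  have hP : (0:ℝ) < (x + κ) ^ (1 - κ) := Real.rpow_pos_of_pos hxκ _
  have hΓ1 : 0 < Real.Gamma x := Real.Gamma_pos_of_pos hx
  have hΓ2 : 0 < Real.Gamma (κ * ↑(n + 1) + 1) := by
    apply Real.Gamma_pos_of_pos; positivity
  have harg : κ * ↑(n + 1) + 1 = x + κ := by rw [hxdef]; push_cast; ring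
  have hA2 : x * Real.Gamma x ≤ Real.Gamma (κ * ↑(n + 1) + 1) * (x + κ) ^ (1 - κ) := by
    rw [harg]
    have := Gamma_rpow_aux hκ0 hκ1 hx
    rwa [Real.Gamma_add_one hx.ne'] at this
  have hA1 : h * (x + κ) ^ (1 - κ) ≤ x / 2 := by
    rw [← mul_div_assoc, div_lt_iff₀ hx] at hn
    linarith
  have hB : Real.Gamma x * h ≤ Real.Gamma (κ * ↑(n + 1) + 1) / 2 := by
    have hmul : (x * Real.Gamma x) * (h * (x + κ) ^ (1 - κ)) ≤
        (Real.Gamma (κ * ↑(n + 1) + 1) * (x + κ) ^ (1 - κ)) * (x / 2) :=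
      mul_le_mul hA2 hA1 (by positivity) (by positivity)
    have h2 : (Real.Gamma x * h) * (x * (x + κ) ^ (1 - κ)) ≤
        (Real.Gamma (κ * ↑(n + 1) + 1) / 2) * (x * (x + κ) ^ (1 - κ)) := by nlinarith
    exact le_of_mul_le_mul_right h2 (by positivity)
  have hnn : (0:ℝ) ≤ h ^ n := pow_nonneg hh n
  rw [Real.norm_eq_abs, Real.norm_eq_abs, abs_of_nonneg (by positivity),
    abs_of_nonneg (by positivity), div_le_iff₀ hΓ2]
  have hh2 : h ≤ Real.Gamma (κ * ↑(n + 1) + 1) / (2 * Real.Gamma x) := by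
    rw [le_div_iff₀ (by positivity)]
    linarith
  calc h ^ (n + 1) = h ^ n * h := pow_succ h n
    _ ≤ h ^ n * (Real.Gamma (κ * ↑(n + 1) + 1) / (2 * Real.Gamma x)) :=
        mul_le_mul_of_nonneg_left hh2 hnn
    _ = 1 / 2 * (h ^ n / Real.Gamma x) * Real.Gamma (κ * ↑(n + 1) + 1) := by ring

lemma ML_nonneg {κ h : ℝ} (hκ0 : 0 < κ) (hh : 0 ≤ h) : 0 ≤ mittagLeffler κ h := by
  apply tsum_nonneg
  intro i
  have : 0 < Real.Gamma (κ * i + 1) := Real.Gamma_pos_of_pos (by positivity)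
  positivity

lemma ML_one_le {κ h : ℝ} (hκ0 : 0 < κ) (hκ1 : κ < 1) (hh : 0 ≤ h) :
    1 ≤ mittagLeffler κ h := by
  have key : h ^ (0:ℕ) / Real.Gamma (κ * (0:ℕ) + 1) ≤ mittagLeffler κ h := by
    refine Summable.le_tsum (ML_summable hκ0 hκ1 hh) 0 (fun j _ => ?_)
    have : 0 < Real.Gamma (κ * j + 1) := Real.Gamma_pos_of_pos (by positivity)
    positivity
  simpa [Real.Gamma_one] using key

lemma ML_mono {κ h h' : ℝ} (hκ0 : 0 < κ) (hκ1 : κ < 1) (hh : 0 ≤ h) (hhh : h ≤ h') :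
    mittagLeffler κ h ≤ mittagLeffler κ h' := by
  apply Summable.tsum_le_tsum _ (ML_summable hκ0 hκ1 hh) (ML_summable hκ0 hκ1 (hh.trans hhh))
  intro i
  have hΓ : 0 < Real.Gamma (κ * i + 1) := Real.Gamma_pos_of_pos (by positivity)
  exact (div_le_div_iff_of_pos_right hΓ).2 (pow_le_pow_left₀ hh hhh i)

end Helpers

lemma realBetaIntegrable {p q : ℝ} (hp : 0 < p) (hq : 0 < q) :
    IntervalIntegrable (fun x : ℝ => x ^ (p - 1) * (1 - x) ^ (q - 1)) volume 0 1 := by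
  have hC : IntervalIntegrable
      (fun x : ℝ => (x : ℂ) ^ ((p : ℂ) - 1) * (1 - (x : ℂ)) ^ ((q : ℂ) - 1)) volume 0 1 :=
    Complex.betaIntegral_convergent (by simpa using hp) (by simpa using hq)
  rw [intervalIntegrable_iff, uIoc_of_le (by norm_num : (0:ℝ) ≤ 1)] at hC ⊢
  have hre := hC.re
  refine hre.congr ((ae_restrict_iff' measurableSet_Ioc).2 (ae_of_all _ ?_))
  intro x hx
  have hx0 : (0:ℝ) ≤ x := hx.1.le
  have hx1 : (0:ℝ) ≤ 1 - x := by linarith [hx.2]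
  have e1 : ((x : ℂ)) ^ ((p : ℂ) - 1) = ((x ^ (p - 1) : ℝ) : ℂ) := by
    rw [Complex.ofReal_cpow hx0]; push_cast; ring_nf
  have e2 : (1 - (x : ℂ)) ^ ((q : ℂ) - 1) = (((1 - x) ^ (q - 1) : ℝ) : ℂ) := by
    rw [show (1 - (x:ℂ)) = (((1 - x : ℝ)) : ℂ) by push_cast; ring,
      Complex.ofReal_cpow hx1]
    push_cast; ring_nf
  simp only [RCLike.re_to_complex, e1, e2, ← Complex.ofReal_mul, Complex.ofReal_re]

lemma realBetaEval {p q : ℝ} (hp : 0 < p) (hq : 0 < q) :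
    ∫ x in (0:ℝ)..1, x ^ (p - 1) * (1 - x) ^ (q - 1)
      = Real.Gamma p * Real.Gamma q / Real.Gamma (p + q) := by
  have hΓ : 0 < Real.Gamma (p + q) := Real.Gamma_pos_of_pos (by linarith)
  have h1 := Complex.Gamma_mul_Gamma_eq_betaIntegral (s := (p:ℂ)) (t := (q:ℂ))
    (by simpa using hp) (by simpa using hq)
  have h2 : Complex.betaIntegral (p:ℂ) (q:ℂ)
      = ((∫ x in (0:ℝ)..1, x ^ (p - 1) * (1 - x) ^ (q - 1) : ℝ) : ℂ) := by
    rw [Complex.betaIntegral, ← intervalIntegral.integral_ofReal]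
    refine intervalIntegral.integral_congr (fun x hx => ?_)
    rw [uIcc_of_le (by norm_num : (0:ℝ) ≤ 1)] at hx
    have hx0 : (0:ℝ) ≤ x := hx.1
    have hx1 : (0:ℝ) ≤ 1 - x := by linarith [hx.2]
    have e1 : ((x : ℂ)) ^ ((p : ℂ) - 1) = ((x ^ (p - 1) : ℝ) : ℂ) := by
      rw [Complex.ofReal_cpow hx0]; push_cast; ring_nf
    have e2 : (1 - (x : ℂ)) ^ ((q : ℂ) - 1) = (((1 - x) ^ (q - 1) : ℝ) : ℂ) := by
      rw [show (1 - (x:ℂ)) = (((1 - x : ℝ)) : ℂ) by push_cast; ring,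
        Complex.ofReal_cpow hx1]
      push_cast; ring_nf
    rw [e1, e2, ← Complex.ofReal_mul]
  rw [h2, Complex.Gamma_ofReal, Complex.Gamma_ofReal, show ((p:ℂ) + q) = ((p + q : ℝ) : ℂ) by
    push_cast; ring, Complex.Gamma_ofReal, ← Complex.ofReal_mul, ← Complex.ofReal_mul] at h1
  have h3 : Real.Gamma p * Real.Gamma q
      = Real.Gamma (p + q) * ∫ x in (0:ℝ)..1, x ^ (p - 1) * (1 - x) ^ (q - 1) :=
    mod_cast h1
  rw [eq_div_iff hΓ.ne']
  linarith [h3]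

/-- value of the scaled beta integral on `0..t`. -/
lemma beta0Eval {p q t : ℝ} (hp : 0 < p) (hq : 0 < q) (ht : 0 < t) :
    ∫ s in (0:ℝ)..t, (t - s) ^ (p - 1) * s ^ (q - 1)
      = Real.Gamma p * Real.Gamma q / Real.Gamma (p + q) * t ^ (p + q - 1) := by
  have hsubst := intervalIntegral.integral_comp_mul_left
    (a := (0:ℝ)) (b := 1) (fun s => (t - s) ^ (p - 1) * s ^ (q - 1)) ht.ne'
  simp only [mul_zero, mul_one, smul_eq_mul] at hsubst
  have h2 : ∫ x in (0:ℝ)..1, (t - t * x) ^ (p - 1) * (t * x) ^ (q - 1)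
      = (t ^ (p - 1) * t ^ (q - 1)) * ∫ x in (0:ℝ)..1, (1 - x) ^ (p - 1) * x ^ (q - 1) := by
    rw [← intervalIntegral.integral_const_mul]
    refine intervalIntegral.integral_congr (fun x hx => ?_)
    rw [uIcc_of_le (by norm_num : (0:ℝ) ≤ 1)] at hx
    have hx0 : (0:ℝ) ≤ x := hx.1
    have hx1 : (0:ℝ) ≤ 1 - x := by linarith [hx.2]
    rw [show t - t * x = t * (1 - x) by ring, Real.mul_rpow ht.le hx1,
      Real.mul_rpow ht.le hx0]
    ring
  have h3 : ∫ x in (0:ℝ)..1, (1 - x) ^ (p - 1) * x ^ (q - 1)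
      = Real.Gamma q * Real.Gamma p / Real.Gamma (p + q) := by
    rw [show (p + q) = q + p by ring, ← realBetaEval hq hp]
    refine intervalIntegral.integral_congr (fun x hx => ?_)
    ring
  have h4 : ∫ s in (0:ℝ)..t, (t - s) ^ (p - 1) * s ^ (q - 1)
      = t * ∫ x in (0:ℝ)..1, (t - t * x) ^ (p - 1) * (t * x) ^ (q - 1) := by
    rw [hsubst, ← mul_assoc, mul_inv_cancel₀ ht.ne', one_mul]
  rw [h4, h2, h3]
  rw [show t ^ (p - 1) * t ^ (q - 1) = t ^ (p + q - 2) by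
    rw [← Real.rpow_add ht]; ring_nf]
  rw [show t * (t ^ (p + q - 2) * (Real.Gamma q * Real.Gamma p / Real.Gamma (p + q)))
      = (t * t ^ (p + q - 2)) * (Real.Gamma q * Real.Gamma p / Real.Gamma (p + q)) by ring]
  rw [show t * t ^ (p + q - 2) = t ^ (p + q - 1) by
    nth_rewrite 1 [← Real.rpow_one t]
    rw [← Real.rpow_add ht]; ring_nf]
  ring

/-- integrability of the scaled beta integrand on `0..t`. -/
lemma beta0Integrable {p q t : ℝ} (hp : 0 < p) (hq : 0 < q) (ht : 0 < t) :
    IntervalIntegrable (fun s => (t - s) ^ (p - 1) * s ^ (q - 1)) volume 0 t := by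
  have h1 : IntervalIntegrable (fun x : ℝ => x ^ (q - 1) * (1 - x) ^ (p - 1)) volume 0 1 :=
    realBetaIntegrable hq hp
  have h2 : IntervalIntegrable (fun s : ℝ => (t⁻¹ * s) ^ (q - 1) * (1 - t⁻¹ * s) ^ (p - 1))
      volume 0 t := by
    have := h1.comp_mul_left (c := t⁻¹) enorm_ne_top enorm_ne_top
    simpa [one_div, inv_inv] using this
  have h3 := h2.const_mul (t ^ (p - 1) * t ^ (q - 1))
  refine h3.congr_Ioc ht.le fun s hs => ?_
  have hs0 : 0 ≤ t⁻¹ * s := mul_nonneg (inv_nonneg.2 ht.le) hs.1.le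
  have hs1 : 0 ≤ 1 - t⁻¹ * s := by
    have : t⁻¹ * s ≤ 1 := by
      rw [inv_mul_le_iff₀ ht, mul_one]
      exact hs.2
    linarith
  calc (t ^ (p-1) * t ^ (q-1)) * ((t⁻¹*s) ^ (q-1) * (1 - t⁻¹*s) ^ (p-1))
      = (t ^ (p-1) * (1 - t⁻¹*s) ^ (p-1)) * (t ^ (q-1) * (t⁻¹*s) ^ (q-1)) := by ring
    _ = (t * (1 - t⁻¹*s)) ^ (p-1) * (t * (t⁻¹*s)) ^ (q-1) := by
        rw [Real.mul_rpow ht.le hs1, Real.mul_rpow ht.le hs0]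
    _ = (t - s) ^ (p-1) * s ^ (q-1) := by
        rw [show t * (1 - t⁻¹*s) = t - s by field_simp, show t * (t⁻¹*s) = s by field_simp]

lemma henry {u : ℝ → ℝ} {tstar a b κ C : ℝ} (hκ0 : 0 < κ) (hκ1 : κ < 1) (htstar : 0 < tstar)
    (ha : 0 ≤ a) (hb : 0 ≤ b)
    (hu0 : ∀ s ∈ Set.Icc 0 tstar, 0 ≤ u s)
    (hC : ∀ s ∈ Set.Icc 0 tstar, u s ≤ C)
    (hmeas : AEMeasurable u (volume.restrict (Set.Icc 0 tstar)))
    (hineq : ∀ t ∈ Set.Icc 0 tstar, u t ≤ a + b * ∫ s in (0:ℝ)..t, (t - s) ^ (κ - 1) * u s) :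
    ∀ t ∈ Set.Icc 0 tstar, u t ≤ a * mittagLeffler κ (b * Real.Gamma κ * t ^ κ) := by
  have hΓκ : 0 < Real.Gamma κ := Real.Gamma_pos_of_pos hκ0
  have hC0 : 0 ≤ C := le_trans (hu0 0 ⟨le_rfl, htstar.le⟩) (hC 0 ⟨le_rfl, htstar.le⟩)
  set K : ℝ := b * Real.Gamma κ with hK
  have hK0 : 0 ≤ K := by positivity
  clear_value K
  have hΓpos : ∀ x : ℝ, 0 ≤ x → 0 < Real.Gamma (κ * x + 1) := fun x hx =>
    Real.Gamma_pos_of_pos (by positivity)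
  set G : ℕ → ℝ → ℝ := fun n s =>
    a * (∑ i ∈ Finset.range n, K ^ i * s ^ (κ * i) / Real.Gamma (κ * i + 1))
      + C * K ^ n * s ^ (κ * n) / Real.Gamma (κ * n + 1) with hG
  have claim : ∀ n, ∀ t ∈ Set.Icc 0 tstar, u t ≤ G n t := by
    intro n
    induction n with
    | zero =>
      intro t htt
      have hG0 : G 0 t = C := by simp [hG, Real.Gamma_one]
      rw [hG0]; exact hC t htt
    | succ n IH =>
      intro t htt
      rcases eq_or_lt_of_le htt.1 with h0 | htpos
      · -- t = 0
        have hu0' : u t ≤ a := by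
          have := hineq t htt
          rw [← h0] at this ⊢
          simpa [intervalIntegral.integral_same] using this
        have hGt : G (n+1) t = a := by
          rw [← h0]
          simp only [hG]
          have h1 : (∑ i ∈ Finset.range (n+1), K ^ i * (0:ℝ) ^ (κ * i) / Real.Gamma (κ * i + 1)) = 1 := by
            rw [Finset.sum_range_succ']
            have hz : ∀ i ∈ Finset.range n,
                K ^ (i+1) * (0:ℝ) ^ (κ * ((i+1 : ℕ) : ℝ)) / Real.Gamma (κ * ((i+1 : ℕ) : ℝ) + 1) = 0 := by
              intro i _
              have : κ * ((i+1 : ℕ) : ℝ) ≠ 0 := by positivity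
              rw [Real.zero_rpow this]
              simp
            rw [Finset.sum_eq_zero hz]
            simp [Real.Gamma_one]
          rw [h1]
          have h2 : κ * (((n+1 : ℕ)) : ℝ) ≠ 0 := by positivity
          rw [Real.zero_rpow h2]
          simp
        rw [hGt]; exact hu0'
      · -- 0 < t
        have hIcc : Set.Icc (0:ℝ) t ⊆ Set.Icc 0 tstar := Set.Icc_subset_Icc le_rfl htt.2
        have hGpt : ∀ s ∈ Set.Icc (0:ℝ) t, u s ≤ G n s := fun s hs => IH s (hIcc hs)
        have hker_nonneg : ∀ s ∈ Set.Icc (0:ℝ) t, 0 ≤ (t - s) ^ (κ-1) := fun s hs =>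
          Real.rpow_nonneg (by linarith [hs.2]) _
        have hFint : ∀ i : ℕ, IntervalIntegrable (fun s => (t - s) ^ (κ-1) * s ^ (κ * (i:ℝ)))
            volume 0 t := by
          intro i
          have h := beta0Integrable (p := κ) (q := κ * (i:ℝ) + 1) hκ0 (by positivity) htpos
          simpa [show κ * (i:ℝ) + 1 - 1 = κ * (i:ℝ) by ring] using h
        have hFval : ∀ i : ℕ, (∫ s in (0:ℝ)..t, (t - s) ^ (κ-1) * s ^ (κ * (i:ℝ)))
            = Real.Gamma κ * Real.Gamma (κ * (i:ℝ) + 1) / Real.Gamma (κ * ((i:ℝ)+1) + 1)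
              * t ^ (κ * ((i:ℝ)+1)) := by
          intro i
          have h := beta0Eval (p := κ) (q := κ * (i:ℝ) + 1) hκ0 (by positivity) htpos
          simp only [show κ * (i:ℝ) + 1 - 1 = κ * (i:ℝ) by ring] at h
          rw [h, show κ + (κ * (i:ℝ) + 1) = κ * ((i:ℝ)+1) + 1 by ring,
            show κ * ((i:ℝ)+1) + 1 - 1 = κ * ((i:ℝ)+1) by ring]
        have hexp : ∀ s : ℝ, (t - s) ^ (κ-1) * G n s
            = (∑ i ∈ Finset.range n,
                (a * K ^ i / Real.Gamma (κ * i + 1)) * ((t - s) ^ (κ-1) * s ^ (κ * (i:ℝ))))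
              + (C * K ^ n / Real.Gamma (κ * n + 1)) * ((t - s) ^ (κ-1) * s ^ (κ * (n:ℝ))) := by
          intro s
          simp only [hG, mul_add, Finset.mul_sum]
          congr 1
          · exact Finset.sum_congr rfl fun i _ => by ring
          · ring
        have hsumInt : IntervalIntegrable (fun s => ∑ i ∈ Finset.range n,
            (a * K ^ i / Real.Gamma (κ * i + 1)) * ((t - s) ^ (κ-1) * s ^ (κ * (i:ℝ))))
            volume 0 t := by
          have := IntervalIntegrable.sum (μ := volume) (a := 0) (b := t) (Finset.range n)
            (f := fun i => fun s =>
              (a * K ^ i / Real.Gamma (κ * i + 1)) * ((t - s) ^ (κ-1) * s ^ (κ * (i:ℝ))))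
            (fun i _ => (hFint i).const_mul _)
          have h2 : (fun s => ∑ i ∈ Finset.range n,
              (a * K ^ i / Real.Gamma (κ * i + 1)) * ((t - s) ^ (κ-1) * s ^ (κ * (i:ℝ))))
              = ∑ i ∈ Finset.range n, (fun s =>
                (a * K ^ i / Real.Gamma (κ * i + 1)) * ((t - s) ^ (κ-1) * s ^ (κ * (i:ℝ)))) := by
            funext s
            rw [Finset.sum_apply]
          rw [h2]; exact this
        have hkgInt : IntervalIntegrable (fun s => (t - s) ^ (κ-1) * G n s) volume 0 t := by
          have h2 := hsumInt.add ((hFint n).const_mul (C * K ^ n / Real.Gamma (κ * n + 1)))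
          have hfun : (fun s => (t - s) ^ (κ-1) * G n s) = (fun s =>
              (∑ i ∈ Finset.range n,
                (a * K ^ i / Real.Gamma (κ * i + 1)) * ((t - s) ^ (κ-1) * s ^ (κ * (i:ℝ))))
              + (C * K ^ n / Real.Gamma (κ * n + 1)) * ((t - s) ^ (κ-1) * s ^ (κ * (n:ℝ)))) :=
            funext hexp
          rw [hfun]; exact h2
        have hkeruInt : IntervalIntegrable (fun s => (t - s) ^ (κ-1) * u s) volume 0 t := by
          rw [intervalIntegrable_iff, uIoc_of_le htpos.le]
          have hkg' := hkgInt
          rw [intervalIntegrable_iff, uIoc_of_le htpos.le] at hkg'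
          apply MeasureTheory.Integrable.mono hkg'
          · have hker : Measurable fun s : ℝ => (t - s) ^ (κ-1) := by fun_prop
            have hsub : Set.Ioc (0:ℝ) t ⊆ Set.Icc 0 tstar :=
              fun s hs => ⟨hs.1.le, hs.2.trans htt.2⟩
            have huae : AEMeasurable u (volume.restrict (Set.Ioc 0 t)) :=
              hmeas.mono_measure (Measure.restrict_mono hsub le_rfl)
            exact (hker.aemeasurable.mul huae).aestronglyMeasurable
          · refine (ae_restrict_iff' measurableSet_Ioc).2 (ae_of_all _ fun s hs => ?_)
            have h1 : 0 ≤ (t - s) ^ (κ-1) := Real.rpow_nonneg (by linarith [hs.2]) _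
            have h2 : 0 ≤ u s := hu0 s ⟨hs.1.le, hs.2.trans htt.2⟩
            rw [Real.norm_eq_abs, Real.norm_eq_abs, abs_of_nonneg (mul_nonneg h1 h2)]
            exact le_trans (mul_le_mul_of_nonneg_left (hGpt s ⟨hs.1.le, hs.2⟩) h1) (le_abs_self _)
        have hmono : (∫ s in (0:ℝ)..t, (t - s) ^ (κ-1) * u s)
            ≤ ∫ s in (0:ℝ)..t, (t - s) ^ (κ-1) * G n s :=
          intervalIntegral.integral_mono_on htpos.le hkeruInt hkgInt fun s hs =>
            mul_le_mul_of_nonneg_left (hGpt s hs) (hker_nonneg s hs)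
        have hval : (∫ s in (0:ℝ)..t, (t - s) ^ (κ-1) * G n s)
            = (∑ i ∈ Finset.range n, (a * K ^ i / Real.Gamma (κ * i + 1))
                * (Real.Gamma κ * Real.Gamma (κ * (i:ℝ) + 1) / Real.Gamma (κ * ((i:ℝ)+1) + 1)
                    * t ^ (κ * ((i:ℝ)+1))))
              + (C * K ^ n / Real.Gamma (κ * n + 1))
                * (Real.Gamma κ * Real.Gamma (κ * (n:ℝ) + 1) / Real.Gamma (κ * ((n:ℝ)+1) + 1)
                    * t ^ (κ * ((n:ℝ)+1))) := by
          simp only [hexp]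
          rw [intervalIntegral.integral_add hsumInt ((hFint n).const_mul _),
            intervalIntegral.integral_finset_sum (fun i _ => (hFint i).const_mul _)]
          simp only [intervalIntegral.integral_const_mul]
          rw [hFval n]
          congr 1
          exact Finset.sum_congr rfl fun i _ => by rw [hFval i]
        have hterm : ∀ (c : ℝ) (i : ℕ), b * ((c * K ^ i / Real.Gamma (κ * i + 1))
            * (Real.Gamma κ * Real.Gamma (κ * (i:ℝ) + 1) / Real.Gamma (κ * ((i:ℝ)+1) + 1)
                * t ^ (κ * ((i:ℝ)+1))))
            = c * (K ^ (i+1) * t ^ (κ * ((i:ℝ)+1)) / Real.Gamma (κ * ((i:ℝ)+1) + 1)) := by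
          intro c i
          have h1 : Real.Gamma (κ * (i:ℝ) + 1) ≠ 0 := (hΓpos i (Nat.cast_nonneg i)).ne'
          have h2 : Real.Gamma (κ * ((i:ℝ)+1) + 1) ≠ 0 :=
            (Real.Gamma_pos_of_pos (by positivity)).ne'
          rw [hK, pow_succ]
          field_simp
        calc u t ≤ a + b * ∫ s in (0:ℝ)..t, (t - s) ^ (κ-1) * u s := hineq t htt
          _ ≤ a + b * ∫ s in (0:ℝ)..t, (t - s) ^ (κ-1) * G n s :=
              add_le_add_right (mul_le_mul_of_nonneg_left hmono hb) a
          _ = G (n+1) t := by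
              rw [hval]
              simp only [hG]
              rw [Finset.sum_range_succ']
              push_cast
              rw [mul_add b, Finset.mul_sum]
              rw [Finset.sum_congr rfl fun i _ => hterm a i, hterm C n]
              simp only [pow_zero, mul_zero, Real.rpow_zero, zero_add, Real.Gamma_one]
              rw [mul_add a, Finset.mul_sum]
              ring
  -- pass to the limit
  intro t htt
  have hh0 : 0 ≤ K * t ^ κ := mul_nonneg hK0 (Real.rpow_nonneg htt.1 _)
  have hsum := ML_summable (h := K * t ^ κ) hκ0 hκ1 hh0
  have hpow : ∀ i : ℕ, t ^ (κ * (i:ℝ)) = (t ^ κ) ^ i := by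
    intro i
    rw [Real.rpow_mul htt.1, Real.rpow_natCast]
  have hbound : ∀ n : ℕ, u t ≤ a * (∑ i ∈ Finset.range n,
      (K * t ^ κ) ^ i / Real.Gamma (κ * i + 1))
      + C * ((K * t ^ κ) ^ n / Real.Gamma (κ * n + 1)) := by
    intro n
    have h1 := claim n t htt
    have h2 : G n t = a * (∑ i ∈ Finset.range n,
        (K * t ^ κ) ^ i / Real.Gamma (κ * i + 1))
        + C * ((K * t ^ κ) ^ n / Real.Gamma (κ * n + 1)) := by
      simp only [hG, hpow, mul_pow]
      ring
    rw [h2] at h1; exact h1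
  have hlim : Tendsto (fun n : ℕ => a * (∑ i ∈ Finset.range n,
      (K * t ^ κ) ^ i / Real.Gamma (κ * i + 1))
      + C * ((K * t ^ κ) ^ n / Real.Gamma (κ * n + 1))) atTop
      (nhds (a * mittagLeffler κ (K * t ^ κ) + C * 0)) := by
    exact (hsum.hasSum.tendsto_sum_nat.const_mul a).add
      (hsum.tendsto_atTop_zero.const_mul C)
  have := ge_of_tendsto' hlim hbound
  rw [mul_zero, add_zero] at this
  exact this

lemma bounded_of_IC {X : Type*} [NormedAddCommGroup X] {T : ℝ} {m : ℕ} {τ : ℕ → ℝ} {z : ℝ → X}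
    (hzIC : IC T m τ z) : ∃ C, ∀ s ∈ Set.Icc (0:ℝ) T, ‖z s‖ ≤ C := by
  have hcompact : IsCompact (Set.Icc (0:ℝ) T) := isCompact_Icc
  refine hcompact.induction_on (p := fun S => ∃ C, ∀ x ∈ S, ‖z x‖ ≤ C)
    ⟨0, by simp⟩
    (fun s t hst h => h.imp fun C hC x hx => hC x (hst hx))
    (fun s t hs ht => by
      obtain ⟨C1, h1⟩ := hs; obtain ⟨C2, h2⟩ := ht
      exact ⟨max C1 C2, fun x hx => hx.elim
        (fun h => (h1 x h).trans (le_max_left _ _))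
        (fun h => (h2 x h).trans (le_max_right _ _))⟩)
    (fun x hx => ?_)
  by_cases hximp : ∃ j, 1 ≤ j ∧ j ≤ m ∧ x = τ j
  · obtain ⟨j, hj1, hjm, hxj⟩ := hximp
    obtain ⟨hleft, L, hright⟩ := hzIC.2 j hj1 hjm
    rw [← hxj] at hleft hright
    set B : ℝ := max (‖z x‖ + 1) (‖L‖ + 1) with hB
    have h1 : ∀ᶠ s in nhdsWithin x (Set.Iio x), ‖z s‖ ≤ B := by
      have := Filter.Tendsto.eventually_lt_const
        (by linarith : ‖z x‖ < ‖z x‖ + 1) hleft.norm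
      exact this.mono fun s hs => hs.le.trans (le_max_left _ _)
    have h2 : ∀ᶠ s in nhdsWithin x (Set.Ioi x), ‖z s‖ ≤ B := by
      have := Filter.Tendsto.eventually_lt_const
        (by linarith : ‖L‖ < ‖L‖ + 1) hright.norm
      exact this.mono fun s hs => hs.le.trans (le_max_right _ _)
    refine ⟨{s | ‖z s‖ ≤ B}, ?_, B, fun s hs => hs⟩
    have hsub : Set.Icc (0:ℝ) T ⊆ (Set.Iio x ∪ Set.Ioi x) ∪ {x} := by
      intro s _
      rcases lt_trichotomy s x with h | h | h
      · exact Or.inl (Or.inl h)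
      · exact Or.inr h
      · exact Or.inl (Or.inr h)
    have hle : nhdsWithin x (Set.Icc 0 T) ≤ nhdsWithin x ((Set.Iio x ∪ Set.Ioi x) ∪ {x}) :=
      nhdsWithin_mono x hsub
    apply hle
    rw [nhdsWithin_union, nhdsWithin_union, nhdsWithin_singleton, Filter.mem_sup,
      Filter.mem_sup]
    refine ⟨⟨h1, h2⟩, ?_⟩
    rw [Filter.mem_pure]
    show ‖z x‖ ≤ B
    calc ‖z x‖ ≤ ‖z x‖ + 1 := by linarith
      _ ≤ B := le_max_left _ _
  · push_neg at hximp
    have hcont := hzIC.1 x hx (fun j h1 h2 => hximp j h1 h2)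
    have ev := Filter.Tendsto.eventually_lt_const
      (by linarith : ‖z x‖ < ‖z x‖ + 1) hcont.norm
    exact ⟨{s | ‖z s‖ ≤ ‖z x‖ + 1}, ev.mono fun s hs => hs.le, ‖z x‖ + 1, fun s hs => hs⟩

lemma meas_of_IC {X : Type*} [NormedAddCommGroup X] {T : ℝ} {m : ℕ} {τ : ℕ → ℝ} {z : ℝ → X}
    (hzIC : IC T m τ z) :
    AEMeasurable (fun s => ‖z s‖) (volume.restrict (Set.Icc (0:ℝ) T)) := by
  classical
  set F : Set ℝ := τ '' (Set.Icc 1 m) with hF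
  have hFm : F.Finite := (Set.finite_Icc 1 m).image τ
  have hS : MeasurableSet (Set.Icc (0:ℝ) T \ F) := measurableSet_Icc.diff hFm.measurableSet
  have hcont : ContinuousOn z (Set.Icc (0:ℝ) T \ F) := by
    intro s hs
    have := hzIC.1 s hs.1 (fun j h1 h2 hsj => hs.2 ⟨j, ⟨h1, h2⟩, hsj.symm⟩)
    exact this.mono Set.diff_subset
  have h1 : AEMeasurable (fun s => ‖z s‖) (volume.restrict (Set.Icc (0:ℝ) T \ F)) :=
    hcont.norm.aemeasurable hS
  have hFnull : volume F = 0 := hFm.measure_zero _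
  have h2 : volume.restrict (Set.Icc (0:ℝ) T \ F) = volume.restrict (Set.Icc (0:ℝ) T) := by
    apply Measure.restrict_congr_set
    exact (MeasureTheory.diff_ae_eq_self).2
      (measure_mono_null Set.inter_subset_right hFnull)
  rw [h2] at h1
  exact h1

/-- impulsive fractional Gronwall inequality. -/
theorem statement_2
    {X : Type*} [NormedAddCommGroup X]
    (T : ℝ) (hT : 0 < T) (m : ℕ) (hm : 1 ≤ m) (τ : ℕ → ℝ)
    (hτ0 : τ 0 = 0) (hτT : τ (m+1) = T) (hτmono : ∀ j ≤ m, τ j < τ (j+1))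
    (κ : ℝ) (hκ : κ ∈ Set.Ioo (0:ℝ) 1)
    (k₁ k₂ : ℝ) (hk₁ : 0 ≤ k₁) (hk₂ : 0 ≤ k₂)
    (d : ℕ → ℝ) (hd : ∀ j, 1 ≤ j → j ≤ m → 0 ≤ d j)
    (Dstar : ℝ) (hDstar : IsGreatest ((fun j => d j) '' (Set.Icc 1 m)) Dstar)
    (z : ℝ → X) (hzIC : IC T m τ z)
    (hineq : ∀ t ∈ Set.Icc (0:ℝ) T,
      ‖z t‖ ≤ k₁ + k₂ * (∫ s in (0:ℝ)..t, ((t - s) ^ (κ - 1) : ℝ) * ‖z s‖)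
        + ∑ j ∈ (Finset.Icc 1 m).filter (fun j => τ j < t), d j * ‖z (τ j)‖) :
    ∀ j ≤ m, ∀ t ∈ Set.Ioc (τ j) (τ (j+1)),
      ‖z t‖ ≤ k₁ * (1 + Dstar * mittagLeffler κ (k₂ * Real.Gamma κ * t ^ κ)) ^ j
        * mittagLeffler κ (k₂ * Real.Gamma κ * t ^ κ) := by
  obtain ⟨hκ0, hκ1⟩ := hκ
  have hΓκ : 0 < Real.Gamma κ := Real.Gamma_pos_of_pos hκ0
  obtain ⟨C, hC⟩ := bounded_of_IC hzIC
  have hmeas := meas_of_IC hzIC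
  -- monotonicity of τ
  have hmono' : ∀ j ≤ m + 1, ∀ i < j, τ i < τ j := by
    intro j hj
    induction j with
    | zero => intro i hi; omega
    | succ k IHk =>
      intro i hi
      rcases Nat.lt_succ_iff_lt_or_eq.mp hi with h | h
      · exact (IHk (by omega) i h).trans (hτmono k (by omega))
      · subst h; exact hτmono i (by omega)
  have hmono'' : ∀ i j, i ≤ j → j ≤ m + 1 → τ i ≤ τ j := by
    intro i j hij hj
    rcases eq_or_lt_of_le hij with h | h
    · subst h; exact le_rfl
    · exact (hmono' j hj i h).le
  have hτ0le : ∀ j ≤ m + 1, 0 ≤ τ j := by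
    intro j hj
    rw [← hτ0]
    exact hmono'' 0 j (Nat.zero_le j) hj
  have hD0 : 0 ≤ Dstar := by
    obtain ⟨i, hi, hieq⟩ := hDstar.1
    rw [← hieq]
    exact hd i hi.1 hi.2
  intro j
  induction j using Nat.strong_induction_on with
  | _ j IH =>
    intro hjm t ht
    have htpos : 0 < t := lt_of_le_of_lt (hτ0le j (by omega)) ht.1
    have htT : t ≤ T := by
      rw [← hτT]
      exact ht.2.trans (hmono'' (j+1) (m+1) (by omega) le_rfl)
    have hIccT : Set.Icc (0:ℝ) t ⊆ Set.Icc 0 T := Set.Icc_subset_Icc le_rfl htT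
    have hargnn : 0 ≤ k₂ * Real.Gamma κ * t ^ κ := by positivity
    have hE0 : 0 ≤ mittagLeffler κ (k₂ * Real.Gamma κ * t ^ κ) := ML_nonneg hκ0 hargnn
    set E : ℝ := mittagLeffler κ (k₂ * Real.Gamma κ * t ^ κ) with hE
    set u : ℝ → X := z with hu
    set A : ℝ := k₁ + ∑ i ∈ Finset.Icc 1 j, d i * ‖z (τ i)‖ with hA
    have hA0 : 0 ≤ A := by
      rw [hA]
      refine add_nonneg hk₁ (Finset.sum_nonneg fun i hi => ?_)
      obtain ⟨h1, h2⟩ := Finset.mem_Icc.mp hi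
      exact mul_nonneg (hd i h1 (h2.trans hjm)) (norm_nonneg _)
    have hineq' : ∀ s ∈ Set.Icc (0:ℝ) t,
        ‖z s‖ ≤ A + k₂ * ∫ r in (0:ℝ)..s, (s - r) ^ (κ - 1) * ‖z r‖ := by
      intro s hs
      have h1 := hineq s (hIccT hs)
      have h2 : (∑ i ∈ (Finset.Icc 1 m).filter (fun i => τ i < s), d i * ‖z (τ i)‖)
          ≤ ∑ i ∈ Finset.Icc 1 j, d i * ‖z (τ i)‖ := by
        apply Finset.sum_le_sum_of_subset_of_nonneg
        · intro i hi
          rw [Finset.mem_filter, Finset.mem_Icc] at hi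
          rw [Finset.mem_Icc]
          refine ⟨hi.1.1, ?_⟩
          by_contra hij
          push_neg at hij
          have hji : τ (j+1) ≤ τ i := hmono'' (j+1) i hij (by omega)
          have hst : s ≤ τ (j+1) := hs.2.trans ht.2
          linarith [hi.2]
        · intro i hi _
          obtain ⟨h1', h2'⟩ := Finset.mem_Icc.mp hi
          exact mul_nonneg (hd i h1' (h2'.trans hjm)) (norm_nonneg _)
      rw [hA]
      linarith
    have hH := henry (u := fun s => ‖z s‖) hκ0 hκ1 htpos hA0 hk₂
      (fun s _ => norm_nonneg _)
      (fun s hs => hC s (hIccT hs))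
      (hmeas.mono_measure (Measure.restrict_mono hIccT le_rfl))
      hineq' t ⟨htpos.le, le_rfl⟩
    -- bound the constant A
    have hterm2 : ∀ i ∈ Finset.Icc 1 j, d i * ‖z (τ i)‖
        ≤ (Dstar * E) * (k₁ * (1 + Dstar * E) ^ (i - 1)) := by
      intro i hi
      obtain ⟨hi1, hij⟩ := Finset.mem_Icc.mp hi
      have him : i ≤ m := hij.trans hjm
      have hipred : i - 1 + 1 = i := Nat.succ_pred_eq_of_pos hi1
      have hτmem : τ i ∈ Set.Ioc (τ (i-1)) (τ (i-1+1)) := by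
        rw [hipred]
        exact ⟨by rw [← hipred]; exact hτmono (i-1) (by omega), le_rfl⟩
      have hIH := IH (i-1) (by omega) (by omega) (τ i) hτmem
      have hτi0 : 0 ≤ τ i := hτ0le i (by omega)
      have hτit : τ i ≤ t := le_trans (hmono'' i j hij (by omega)) ht.1.le
      have hargτ : 0 ≤ k₂ * Real.Gamma κ * (τ i) ^ κ := by positivity
      have hEτ0 : 0 ≤ mittagLeffler κ (k₂ * Real.Gamma κ * (τ i) ^ κ) := ML_nonneg hκ0 hargτ
      have hEτ : mittagLeffler κ (k₂ * Real.Gamma κ * (τ i) ^ κ) ≤ E := by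
        rw [hE]
        refine ML_mono hκ0 hκ1 hargτ ?_
        exact mul_le_mul_of_nonneg_left (Real.rpow_le_rpow hτi0 hτit hκ0.le) (by positivity)
      set Eτ : ℝ := mittagLeffler κ (k₂ * Real.Gamma κ * (τ i) ^ κ) with hEτdef
      have hbase : (1 + Dstar * Eτ) ^ (i-1) ≤ (1 + Dstar * E) ^ (i-1) := by
        apply pow_le_pow_left₀ (by nlinarith) (by nlinarith)
      have h1p : (0:ℝ) ≤ 1 + Dstar * E := by nlinarith
      have hu_le : ‖z (τ i)‖ ≤ k₁ * (1 + Dstar * E) ^ (i-1) * E := by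
        refine le_trans hIH ?_
        have hx1 : k₁ * (1 + Dstar * Eτ) ^ (i-1) * Eτ ≤ k₁ * (1 + Dstar * E) ^ (i-1) * Eτ :=
          mul_le_mul_of_nonneg_right (mul_le_mul_of_nonneg_left hbase hk₁) hEτ0
        have hx2 : k₁ * (1 + Dstar * E) ^ (i-1) * Eτ ≤ k₁ * (1 + Dstar * E) ^ (i-1) * E :=
          mul_le_mul_of_nonneg_left hEτ (mul_nonneg hk₁ (pow_nonneg h1p _))
        linarith
      have hdD : d i ≤ Dstar := hDstar.2 ⟨i, ⟨hi1, him⟩, rfl⟩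
      calc d i * ‖z (τ i)‖ ≤ Dstar * (k₁ * (1 + Dstar * E) ^ (i-1) * E) :=
            mul_le_mul hdD hu_le (norm_nonneg _) hD0
        _ = (Dstar * E) * (k₁ * (1 + Dstar * E) ^ (i-1)) := by ring
    have hgeom : ∀ J : ℕ, k₁ + ∑ i ∈ Finset.Icc 1 J,
        (Dstar * E) * (k₁ * (1 + Dstar * E) ^ (i - 1)) = k₁ * (1 + Dstar * E) ^ J := by
      intro J
      induction J with
      | zero => simp
      | succ n IHn =>
        rw [Finset.sum_Icc_succ_top (by omega), ← add_assoc, IHn]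
        simp only [Nat.add_sub_cancel]
        ring
    have hAle : A ≤ k₁ * (1 + Dstar * E) ^ j := by
      rw [hA, ← hgeom j]
      exact add_le_add_right (Finset.sum_le_sum hterm2) k₁
    calc ‖z t‖ ≤ A * E := hH
      _ ≤ (k₁ * (1 + Dstar * E) ^ j) * E := mul_le_mul_of_nonneg_right hAle hE0
      _ = k₁ * (1 + Dstar * E) ^ j * E := by ring
end

section
/- Let U₁ and U₂ be real reflexive Banach spaces, ψ : U₁ → U₂ a linear, continuous, compact operator with adjoint ψ* : U₂* → U₁* given by ψ*η = η ∘ ψ, and let φ : U₂ → ℝ be a locally Lipschitz functional whose Clarke generalized gradient satisfies ‖η‖_{U₂*} ≤ c_φ (1 + ‖u‖_{U₂}) for all η ∈ ∂φ(u) and u ∈ U₂, where c_φ > 0 is a constant. Then the set-valued operator W : U₁ ⇒ U₁* defined by W(u) = ψ* ∂φ(ψ(u)) is pseudomonotone. -/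
open Filter Topology NormedSpace

/-- The Clarke generalized directional derivative of `F` at `x` in the direction `v`:
`F°(x;v) = limsup_{w → x, μ → 0⁺} (F (w + μ v) - F w) / μ`. -/
noncomputable def clarkeDeriv {Y : Type*} [NormedAddCommGroup Y] [NormedSpace ℝ Y]
    (F : Y → ℝ) (x v : Y) : ℝ :=
  Filter.limsup (fun p : Y × ℝ => (F (p.1 + p.2 • v) - F p.1) / p.2)
    ((nhds x) ×ˢ (nhdsWithin (0:ℝ) (Set.Ioi 0)))

/-- The Clarke generalized gradient of `F` at `x`:
`∂F(x) = {η ∈ Y* : ⟨η, v⟩ ≤ F°(x;v) for all v}`. -/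
def clarkeGrad {Y : Type*} [NormedAddCommGroup Y] [NormedSpace ℝ Y]
    (F : Y → ℝ) (x : Y) : Set (StrongDual ℝ Y) :=
  {η | ∀ v : Y, η v ≤ clarkeDeriv F x v}

/-- A set-valued operator `G : Z ⇒ Z*` is pseudomonotone if (i) its values are nonempty,
closed, bounded and convex; (ii) its restriction to every finite-dimensional subspace is upper
semicontinuous into `Z*` with the weak topology; (iii) the sequential pseudomonotonicity
condition holds. -/
def SetValuedPseudomonotone {Z : Type*} [NormedAddCommGroup Z] [NormedSpace ℝ Z]
    (G : Z → Set (StrongDual ℝ Z)) : Prop :=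
  (∀ z : Z, (G z).Nonempty ∧ IsClosed (G z) ∧ Bornology.IsBounded (G z) ∧ Convex ℝ (G z)) ∧
  (∀ H : Submodule ℝ Z, FiniteDimensional ℝ H →
    ∀ u : H, ∀ O : Set (WeakDual ℝ Z), IsOpen O →
      (∀ f ∈ G (u : Z), StrongDual.toWeakDual f ∈ O) →
      ∃ U : Set H, IsOpen U ∧ u ∈ U ∧
        ∀ v ∈ U, ∀ f ∈ G ((v : H) : Z), StrongDual.toWeakDual f ∈ O) ∧
  (∀ (zn : ℕ → Z) (z : Z) (zs : ℕ → StrongDual ℝ Z),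
    (∀ f : StrongDual ℝ Z, Tendsto (fun n => f (zn n)) atTop (nhds (f z))) →
    (∀ n, zs n ∈ G (zn n)) →
    Filter.limsup (fun n => zs n (zn n - z)) atTop ≤ 0 →
    ∀ x : Z, ∃ zstar ∈ G z,
      zstar (z - x) ≤ Filter.liminf (fun n => zs n (zn n - x)) atTop)

section Aux

variable {Y : Type*} [NormedAddCommGroup Y] [NormedSpace ℝ Y]

/-- The product filter used in the Clarke derivative. -/
def PF (x : Y) : Filter (Y × ℝ) := (nhds x) ×ˢ (nhdsWithin (0:ℝ) (Set.Ioi 0))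

/-- The difference quotient. -/
noncomputable def dq (F : Y → ℝ) (v : Y) (p : Y × ℝ) : ℝ := (F (p.1 + p.2 • v) - F p.1) / p.2

instance PF_neBot (x : Y) : (PF x).NeBot := by
  unfold PF; infer_instance

lemma clarkeDeriv_eq (F : Y → ℝ) (x v : Y) :
    clarkeDeriv F x v = Filter.limsup (dq F v) (PF x) := rfl

/-- Uniform local bound on difference quotients. -/
lemma dq_bound (F : Y → ℝ) (hF : LocallyLipschitz F) (x : Y) :
    ∃ C : ℝ, 0 ≤ C ∧ ∃ ε : ℝ, 0 < ε ∧ ∀ x' ∈ Metric.ball x ε, ∀ v : Y,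
      ∀ᶠ p in PF x', |dq F v p| ≤ C * ‖v‖ := by
  obtain ⟨K, t, ht, hK⟩ := hF x
  obtain ⟨ε₀, hε₀, hball⟩ := Metric.mem_nhds_iff.mp ht
  refine ⟨K, K.coe_nonneg, ε₀/4, by positivity, fun x' hx' v => ?_⟩
  have h1 : Metric.ball x' (ε₀/4) ∈ 𝓝 x' := Metric.ball_mem_nhds _ (by positivity)
  have hvpos : (0:ℝ) < ‖v‖ + 1 := by positivity
  have h2 : Set.Ioo (0:ℝ) (ε₀/2/(‖v‖+1)) ∈ nhdsWithin (0:ℝ) (Set.Ioi 0) :=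
    Ioo_mem_nhdsGT_of_mem ⟨le_refl _, by positivity⟩
  have hx'x : dist x' x < ε₀/4 := Metric.mem_ball.mp hx'
  have hmain : ∀ᶠ p in PF x', p ∈ Metric.ball x' (ε₀/4) ×ˢ Set.Ioo (0:ℝ) (ε₀/2/(‖v‖+1)) := by
    unfold PF
    exact Filter.mem_prod_iff.mpr ⟨_, h1, _, h2, subset_rfl⟩
  filter_upwards [hmain] with p hp
  obtain ⟨hp1, hp2⟩ := hp
  have hp2' : (0:ℝ) < p.2 := hp2.1
  have hsm : ‖p.2 • v‖ < ε₀/2 := by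
    rw [norm_smul, Real.norm_eq_abs, abs_of_pos hp2']
    calc p.2 * ‖v‖ ≤ p.2 * (‖v‖+1) := by nlinarith
    _ < (ε₀/2/(‖v‖+1)) * (‖v‖+1) := mul_lt_mul_of_pos_right hp2.2 hvpos
    _ = ε₀/2 := by field_simp
  have hd1 : dist p.1 x < ε₀/2 := by
    calc dist p.1 x ≤ dist p.1 x' + dist x' x := dist_triangle _ _ _
    _ < ε₀/4 + ε₀/4 := add_lt_add (Metric.mem_ball.mp hp1) hx'x
    _ = ε₀/2 := by ring
  have hmem1 : p.1 ∈ t := hball (Metric.mem_ball.mpr (by linarith))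
  have hmem2 : p.1 + p.2 • v ∈ t := by
    apply hball
    rw [Metric.mem_ball]
    calc dist (p.1 + p.2 • v) x ≤ dist (p.1 + p.2 • v) p.1 + dist p.1 x := dist_triangle _ _ _
    _ < ε₀/2 + ε₀/2 := by
        apply add_lt_add _ hd1
        rw [dist_eq_norm, add_sub_cancel_left]; exact hsm
    _ = ε₀ := by ring
  have hlip := hK.dist_le_mul _ hmem2 _ hmem1
  rw [dist_eq_norm, dist_eq_norm, add_sub_cancel_left, norm_smul, Real.norm_eq_abs,
    Real.norm_eq_abs, abs_of_pos hp2'] at hlip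
  have habs : |F (p.1 + p.2 • v) - F p.1| ≤ (K:ℝ) * (p.2 * ‖v‖) := hlip
  unfold dq
  rw [abs_div, abs_of_pos hp2', div_le_iff₀ hp2']
  calc |F (p.1 + p.2 • v) - F p.1| ≤ (K:ℝ) * (p.2 * ‖v‖) := habs
  _ = (K:ℝ) * ‖v‖ * p.2 := by ring

lemma dq_bound_at (F : Y → ℝ) (hF : LocallyLipschitz F) (x : Y) :
    ∃ C : ℝ, 0 ≤ C ∧ ∀ v : Y, ∀ᶠ p in PF x, |dq F v p| ≤ C * ‖v‖ := by
  obtain ⟨C, hC0, ε, hε, h⟩ := dq_bound F hF x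
  exact ⟨C, hC0, h x (Metric.mem_ball_self hε)⟩

lemma isBoundedUnder_of_eventually {α : Type*} {f : Filter α} {u : α → ℝ} {b : ℝ}
    (h : ∀ᶠ i in f, u i ≤ b) : f.IsBoundedUnder (· ≤ ·) u :=
  ⟨b, Filter.eventually_map.2 h⟩

lemma dq_isBounded (F : Y → ℝ) (hF : LocallyLipschitz F) (x v : Y) :
    (PF x).IsBoundedUnder (· ≤ ·) (dq F v) := by
  obtain ⟨C, hC0, h⟩ := dq_bound_at F hF x
  exact isBoundedUnder_of_eventually ((h v).mono fun p hp => (abs_le.1 hp).2)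

lemma dq_isCobounded (F : Y → ℝ) (hF : LocallyLipschitz F) (x v : Y) :
    (PF x).IsCoboundedUnder (· ≤ ·) (dq F v) := by
  obtain ⟨C, hC0, h⟩ := dq_bound_at F hF x
  exact Filter.isCoboundedUnder_le_of_eventually_le (PF x)
    ((h v).mono fun p hp => (abs_le.1 hp).1)

lemma clarkeDeriv_abs_le (F : Y → ℝ) (hF : LocallyLipschitz F) (x : Y) :
    ∃ C : ℝ, 0 ≤ C ∧ ∀ v : Y, |clarkeDeriv F x v| ≤ C * ‖v‖ := by
  obtain ⟨C, hC0, h⟩ := dq_bound_at F hF x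
  refine ⟨C, hC0, fun v => abs_le.mpr ⟨?_, ?_⟩⟩
  · rw [clarkeDeriv_eq]
    exact Filter.le_limsup_of_frequently_le
      (((h v).mono fun p hp => (abs_le.1 hp).1).frequently) (dq_isBounded F hF x v)
  · rw [clarkeDeriv_eq]
    exact Filter.limsup_le_of_le (dq_isCobounded F hF x v)
      ((h v).mono fun p hp => (abs_le.1 hp).2)

lemma clarkeDeriv_zero (F : Y → ℝ) (x : Y) : clarkeDeriv F x 0 = 0 := by
  rw [clarkeDeriv_eq]
  have : dq F (0:Y) = fun _ => (0:ℝ) := by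
    funext p; unfold dq; simp
  rw [this, Filter.limsup_const]

end Aux

section Aux2

variable {Y : Type*} [NormedAddCommGroup Y] [NormedSpace ℝ Y]

/-- Upper semicontinuity of the Clarke derivative in the base point. -/
lemma clarkeDeriv_usc (F : Y → ℝ) (hF : LocallyLipschitz F) (x v : Y) {a : ℝ}
    (h : clarkeDeriv F x v < a) : ∀ᶠ x' in 𝓝 x, clarkeDeriv F x' v ≤ a := by
  obtain ⟨C, hC0, hCb⟩ := dq_bound_at F hF x
  have hne : {b | ∀ᶠ p in PF x, dq F v p ≤ b}.Nonempty :=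
    ⟨C*‖v‖, (hCb v).mono fun p hp => (abs_le.1 hp).2⟩
  rw [clarkeDeriv_eq, Filter.limsup_eq] at h
  obtain ⟨b, hbS, hba⟩ := exists_lt_of_csInf_lt hne h
  have hbS' : {p : Y × ℝ | dq F v p ≤ b} ∈ PF x := hbS
  rw [show PF x = (nhds x) ×ˢ (nhdsWithin (0:ℝ) (Set.Ioi 0)) from rfl,
    Filter.mem_prod_iff] at hbS'
  obtain ⟨s, hs, t, ht, hst⟩ := hbS'
  obtain ⟨ε, hε, hball⟩ := Metric.mem_nhds_iff.mp hs
  filter_upwards [Metric.ball_mem_nhds x (half_pos hε)] with x' hx'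
  rw [clarkeDeriv_eq]
  apply Filter.limsup_le_of_le (dq_isCobounded F hF x' v)
  have hb2 : Metric.ball x' (ε/2) ∈ 𝓝 x' := Metric.ball_mem_nhds _ (half_pos hε)
  have hmain : ∀ᶠ p in PF x', p ∈ Metric.ball x' (ε/2) ×ˢ t :=
    Filter.mem_prod_iff.mpr ⟨_, hb2, _, ht, subset_rfl⟩
  filter_upwards [hmain] with p hp
  have hp1 : p.1 ∈ s := by
    apply hball
    rw [Metric.mem_ball]
    calc dist p.1 x ≤ dist p.1 x' + dist x' x := dist_triangle _ _ _
    _ < ε/2 + ε/2 := add_lt_add (Metric.mem_ball.mp hp.1) (Metric.mem_ball.mp hx')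
    _ = ε := by ring
  have : dq F v p ≤ b := hst (Set.mk_mem_prod hp1 hp.2)
  linarith

/-- Positive homogeneity. -/
lemma clarkeDeriv_smul (F : Y → ℝ) (hF : LocallyLipschitz F) (x v : Y) {c : ℝ}
    (hc : 0 < c) : clarkeDeriv F x (c • v) = c * clarkeDeriv F x v := by
  set m : Y × ℝ → Y × ℝ := fun p => (p.1, c * p.2) with hm
  have hfun : dq F (c • v) = fun p => c * dq F v (m p) := by
    funext p
    unfold dq
    simp only [hm]
    rw [smul_comm, smul_smul]
    rw [eq_comm, ← mul_div_assoc, mul_div_mul_left _ _ hc.ne']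
  have key : ∀ d : ℝ, 0 < d →
      Filter.Tendsto (fun p : Y × ℝ => (p.1, d * p.2)) (PF x) (PF x) := by
    intro d hd
    rw [show PF x = (nhds x) ×ˢ (nhdsWithin (0:ℝ) (Set.Ioi 0)) from rfl]
    apply Filter.Tendsto.prodMk tendsto_fst
    rw [tendsto_nhdsWithin_iff]
    constructor
    · have h2 : Filter.Tendsto (fun p : Y × ℝ => p.2)
          ((nhds x) ×ˢ (nhdsWithin (0:ℝ) (Set.Ioi 0))) (𝓝 0) :=
        tendsto_snd.mono_right nhdsWithin_le_nhds
      simpa using h2.const_mul d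
    · have hev : ∀ᶠ p : Y × ℝ in (nhds x) ×ˢ (nhdsWithin (0:ℝ) (Set.Ioi 0)),
          p.2 ∈ Set.Ioi (0:ℝ) := tendsto_snd.eventually eventually_mem_nhdsWithin
      exact hev.mono fun p hp => mul_pos hd hp
  have hmap : Filter.map m (PF x) = PF x := by
    apply le_antisymm (key c hc)
    have hcomp : m ∘ (fun p : Y × ℝ => (p.1, c⁻¹ * p.2)) = id := by
      funext p
      simp [hm, mul_inv_cancel_left₀ hc.ne']
    calc PF x = Filter.map (m ∘ fun p : Y × ℝ => (p.1, c⁻¹ * p.2)) (PF x) := by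
          rw [hcomp, Filter.map_id]
    _ = Filter.map m (Filter.map (fun p : Y × ℝ => (p.1, c⁻¹ * p.2)) (PF x)) := by
          rw [Filter.map_map]
    _ ≤ Filter.map m (PF x) := Filter.map_mono (key c⁻¹ (inv_pos.2 hc))
  obtain ⟨C, hC0, hCb⟩ := dq_bound_at F hF x
  have hev : ∀ᶠ p in PF x, |dq F v p| ≤ C * ‖v‖ := hCb v
  have hevm : ∀ᶠ p in PF x, |dq F v (m p)| ≤ C * ‖v‖ := (key c hc).eventually hev
  have hbd : (PF x).IsBoundedUnder (· ≤ ·) (fun p => dq F v (m p)) :=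
    isBoundedUnder_of_eventually (hevm.mono fun p hp => (abs_le.1 hp).2)
  have hcobd : (PF x).IsCoboundedUnder (· ≤ ·) (fun p => dq F v (m p)) :=
    Filter.isCoboundedUnder_le_of_eventually_le (PF x)
      (hevm.mono fun p hp => (abs_le.1 hp).1)
  have hbd2 : (PF x).IsBoundedUnder (· ≤ ·) (fun p => c * dq F v (m p)) :=
    isBoundedUnder_of_eventually (hevm.mono fun p hp =>
      mul_le_mul_of_nonneg_left (abs_le.1 hp).2 hc.le)
  have hcobd2 : (PF x).IsCoboundedUnder (· ≤ ·) (fun p => c * dq F v (m p)) :=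
    Filter.isCoboundedUnder_le_of_eventually_le (PF x) (hevm.mono fun p hp =>
      mul_le_mul_of_nonneg_left (abs_le.1 hp).1 hc.le)
  have hOI := (OrderIso.mulLeft₀ c hc).limsup_apply (f := PF x)
    (u := fun p => dq F v (m p)) hbd hcobd hbd2 hcobd2
  simp only [OrderIso.mulLeft₀_apply] at hOI
  have hre : Filter.limsup (fun p => dq F v (m p)) (PF x)
      = Filter.limsup (dq F v) (PF x) := by
    show Filter.limsSup (Filter.map (dq F v ∘ m) (PF x)) = _
    rw [← Filter.map_map, hmap]
    rfl
  rw [clarkeDeriv_eq, hfun, ← hOI, hre, clarkeDeriv_eq]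

/-- Subadditivity. -/
lemma clarkeDeriv_add_le (F : Y → ℝ) (hF : LocallyLipschitz F) (x v w : Y) :
    clarkeDeriv F x (v + w) ≤ clarkeDeriv F x v + clarkeDeriv F x w := by
  set m : Y × ℝ → Y × ℝ := fun p => (p.1 + p.2 • w, p.2) with hm
  have hfun : dq F (v + w) = fun p => dq F v (m p) + dq F w p := by
    funext p
    unfold dq
    simp only [hm]
    rw [← add_div]
    congr 1
    rw [smul_add]
    abel
  have hmt : Filter.Tendsto m (PF x) (PF x) := by
    rw [show PF x = (nhds x) ×ˢ (nhdsWithin (0:ℝ) (Set.Ioi 0)) from rfl]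
    apply Filter.Tendsto.prodMk _ tendsto_snd
    have h1 : Filter.Tendsto (fun p : Y × ℝ => p.1)
        ((nhds x) ×ˢ (nhdsWithin (0:ℝ) (Set.Ioi 0))) (𝓝 x) := tendsto_fst
    have h2 : Filter.Tendsto (fun p : Y × ℝ => p.2 • w)
        ((nhds x) ×ˢ (nhdsWithin (0:ℝ) (Set.Ioi 0))) (𝓝 ((0:ℝ) • w)) :=
      (tendsto_snd.mono_right nhdsWithin_le_nhds).smul_const w
    simpa using h1.add h2
  obtain ⟨C, hC0, hCb⟩ := dq_bound_at F hF x
  have hevm : ∀ᶠ p in PF x, |dq F v (m p)| ≤ C * ‖v‖ := hmt.eventually (hCb v)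
  have hcob1 : (PF x).IsCoboundedUnder (· ≤ ·) (fun p => dq F v (m p) + dq F w p) :=
    Filter.isCoboundedUnder_le_of_eventually_le (PF x)
      ((hevm.and (hCb w)).mono fun p hp =>
        add_le_add (abs_le.1 hp.1).1 (abs_le.1 hp.2).1)
  -- it suffices to bound by b₁ + b₂ for eventual bounds b₁, b₂
  rw [clarkeDeriv_eq, clarkeDeriv_eq, clarkeDeriv_eq, hfun]
  have hS1 : {b | ∀ᶠ p in PF x, dq F v p ≤ b}.Nonempty :=
    ⟨C*‖v‖, (hCb v).mono fun p hp => (abs_le.1 hp).2⟩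
  have hS2 : {b | ∀ᶠ p in PF x, dq F w p ≤ b}.Nonempty :=
    ⟨C*‖w‖, (hCb w).mono fun p hp => (abs_le.1 hp).2⟩
  refine forall_gt_iff_le.mp ?_
  intro d hd
  set B := Filter.limsup (dq F v) (PF x) + Filter.limsup (dq F w) (PF x) with hB
  have hδ : 0 < (d - B) / 2 := by simp only [hB] at hd ⊢; linarith
  have h1 : Filter.limsup (dq F v) (PF x) < Filter.limsup (dq F v) (PF x) + (d-B)/2 := by
    linarith
  have h2 : Filter.limsup (dq F w) (PF x) < Filter.limsup (dq F w) (PF x) + (d-B)/2 := by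
    linarith
  rw [Filter.limsup_eq] at h1 h2
  obtain ⟨b₁, hb₁S, hb₁⟩ := exists_lt_of_csInf_lt hS1 h1
  obtain ⟨b₂, hb₂S, hb₂⟩ := exists_lt_of_csInf_lt hS2 h2
  rw [← Filter.limsup_eq] at hb₁ hb₂
  have hb₁m : ∀ᶠ p in PF x, dq F v (m p) ≤ b₁ := hmt.eventually hb₁S
  have hle : Filter.limsup (fun p => dq F v (m p) + dq F w p) (PF x) ≤ b₁ + b₂ :=
    Filter.limsup_le_of_le hcob1
      ((hb₁m.and hb₂S).mono fun p hp => add_le_add hp.1 hp.2)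
  calc Filter.limsup (fun p => dq F v (m p) + dq F w p) (PF x) ≤ b₁ + b₂ := hle
  _ < d := by simp only [hB] at hb₁ hb₂ ⊢; linarith

/-- The Clarke gradient is nonempty. -/
lemma clarkeGrad_nonempty (F : Y → ℝ) (hF : LocallyLipschitz F) (x : Y) :
    (clarkeGrad F x).Nonempty := by
  obtain ⟨C, hC0, habs⟩ := clarkeDeriv_abs_le F hF x
  have N_hom : ∀ c : ℝ, 0 < c → ∀ v : Y, clarkeDeriv F x (c • v) = c * clarkeDeriv F x v :=
    fun c hc v => clarkeDeriv_smul F hF x v hc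
  have N_add : ∀ v w : Y, clarkeDeriv F x (v + w) ≤ clarkeDeriv F x v + clarkeDeriv F x w :=
    fun v w => clarkeDeriv_add_le F hF x v w
  have hf0 : ∀ y : ((⊥ : Submodule ℝ Y) : Submodule ℝ Y),
      (0 : ((⊥ : Submodule ℝ Y)) →ₗ[ℝ] ℝ) y ≤ clarkeDeriv F x y := by
    rintro ⟨y, hy⟩
    rcases Submodule.mem_bot ℝ |>.mp hy with rfl
    show (0:ℝ) ≤ clarkeDeriv F x 0
    exact (clarkeDeriv_zero F x).ge
  obtain ⟨g, -, hg⟩ := exists_extension_of_le_sublinear ⟨⊥, 0⟩ (clarkeDeriv F x)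
    N_hom N_add hf0
  have hgb : ∀ v : Y, ‖g v‖ ≤ C * ‖v‖ := by
    intro v
    rw [Real.norm_eq_abs, abs_le]
    constructor
    · have h1 : g (-v) ≤ clarkeDeriv F x (-v) := hg (-v)
      have h2 : clarkeDeriv F x (-v) ≤ C * ‖v‖ := by
        have := (abs_le.1 (habs (-v))).2
        rwa [norm_neg] at this
      have h3 : g (-v) = - g v := by rw [map_neg]
      linarith [h3 ▸ h1]
    · exact le_trans (hg v) (abs_le.1 (habs v)).2
  refine ⟨LinearMap.mkContinuous g C hgb, fun v => ?_⟩
  exact hg v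

end Aux2

section Aux3

variable {Y : Type*} [NormedAddCommGroup Y] [NormedSpace ℝ Y]

/-- Weak-* closedness of the Clarke gradient along cluster points, with moving base point. -/
lemma clarkeGrad_cluster (F : Y → ℝ) (hF : LocallyLipschitz F) {ι : Type*}
    {l : Filter ι} [l.NeBot] {v : ι → Y} {vl : Y} (hv : Filter.Tendsto v l (𝓝 vl))
    {η : ι → StrongDual ℝ Y} (hmem : ∀ i, η i ∈ clarkeGrad F (v i))
    {η₀ : StrongDual ℝ Y}
    (hcl : MapClusterPt (StrongDual.toWeakDual η₀) l
      (fun i => StrongDual.toWeakDual (η i))) :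
    η₀ ∈ clarkeGrad F vl := by
  intro w
  by_contra hlt
  push_neg at hlt
  set a : ℝ := (clarkeDeriv F vl w + η₀ w) / 2 with ha
  have haa : clarkeDeriv F vl w < a := by simp only [ha]; linarith
  have hab : a < η₀ w := by simp only [ha]; linarith
  have h1 : ∀ᶠ i in l, clarkeDeriv F (v i) w ≤ a :=
    hv.eventually (clarkeDeriv_usc F hF vl w haa)
  have h2 : ∀ᶠ i in l, (η i) w ≤ a := h1.mono fun i hi => le_trans (hmem i w) hi
  have hev : MapClusterPt (η₀ w) l (fun i => (η i) w) := by
    have hc : ContinuousAt (fun ζ : WeakDual ℝ Y => ζ w)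
        (StrongDual.toWeakDual η₀) :=
      (WeakDual.eval_continuous w).continuousAt
    exact hcl.continuousAt_comp hc
  have hfreq : ∃ᶠ i in l, (η i) w ∈ Set.Ioi a :=
    (mapClusterPt_iff_frequently.mp hev) _ (Ioi_mem_nhds hab)
  obtain ⟨i, hi1, hi2⟩ := (hfreq.and_eventually h2).exists
  exact absurd hi2 (not_le.mpr hi1)

/-- Existence of a weak-* cluster point of an eventually norm-bounded family. -/
lemma exists_weak_cluster {ι : Type*} {l : Filter ι} [l.NeBot]
    (η : ι → StrongDual ℝ Y) {R : ℝ} (hR : ∀ᶠ i in l, ‖η i‖ ≤ R) :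
    ∃ η₀ : StrongDual ℝ Y, MapClusterPt (StrongDual.toWeakDual η₀) l
      (fun i => StrongDual.toWeakDual (η i)) := by
  have hK : IsCompact (WeakDual.toStrongDual ⁻¹' Metric.closedBall (0 : StrongDual ℝ Y) R) :=
    WeakDual.isCompact_closedBall (𝕜 := ℝ) 0 R
  have hle : Filter.map (fun i => StrongDual.toWeakDual (η i)) l ≤
      Filter.principal (WeakDual.toStrongDual ⁻¹' Metric.closedBall (0 : StrongDual ℝ Y) R) := by
    rw [Filter.le_principal_iff, Filter.mem_map]
    filter_upwards [hR] with i hi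
    show WeakDual.toStrongDual (StrongDual.toWeakDual (η i)) ∈ Metric.closedBall 0 R
    simpa [mem_closedBall_zero_iff] using hi
  obtain ⟨ζ, hζK, hζ⟩ := hK.exists_mapClusterPt hle
  exact ⟨WeakDual.toStrongDual ζ, hζ⟩

end Aux3

section Aux4

open Pointwise

variable {U₁ : Type*} [NormedAddCommGroup U₁] [NormedSpace ℝ U₁] [CompleteSpace U₁]
variable {U₂ : Type*} [NormedAddCommGroup U₂] [NormedSpace ℝ U₂]

/-- Weakly convergent sequences are norm bounded (uniform boundedness principle). -/
lemma weak_conv_bounded {zn : ℕ → U₁} {z : U₁}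
    (hw : ∀ f : StrongDual ℝ U₁, Filter.Tendsto (fun n => f (zn n)) atTop (𝓝 (f z))) :
    ∃ M : ℝ, 0 ≤ M ∧ ∀ n, ‖zn n‖ ≤ M := by
  have h : ∀ f : StrongDual ℝ U₁, ∃ C, ∀ n,
      ‖(NormedSpace.inclusionInDoubleDual ℝ U₁ (zn n)) f‖ ≤ C := by
    intro f
    obtain ⟨C, hC⟩ := (hw f).norm.bddAbove_range
    refine ⟨C, fun n => ?_⟩
    have := hC (Set.mem_range_self n)
    simpa [NormedSpace.dual_def] using this
  obtain ⟨C', hC'⟩ := banach_steinhaus h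
  refine ⟨max C' 0, le_max_right _ _, fun n => ?_⟩
  have h1 : ‖NormedSpace.inclusionInDoubleDual ℝ U₁ (zn n)‖ = ‖zn n‖ :=
    (NormedSpace.inclusionInDoubleDualLi ℝ (E := U₁)).norm_map (zn n)
  rw [← h1]
  exact le_trans (hC' n) (le_max_left _ _)

/-- A compact operator maps weakly convergent sequences to norm convergent sequences. -/
lemma compact_tendsto (ψ : U₁ →L[ℝ] U₂) (hψc : IsCompactOperator (⇑ψ))
    {zn : ℕ → U₁} {z : U₁}
    (hw : ∀ f : StrongDual ℝ U₁, Filter.Tendsto (fun n => f (zn n)) atTop (𝓝 (f z))) :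
    Filter.Tendsto (fun n => ψ (zn n)) atTop (𝓝 (ψ z)) := by
  obtain ⟨M, hM0, hM⟩ := weak_conv_bounded hw
  obtain ⟨K, hKc, hKmem⟩ := hψc
  obtain ⟨r, hr, hball⟩ := Metric.mem_nhds_iff.mp hKmem
  set s : ℝ := r / (2 * (M + 1)) with hs
  have hspos : 0 < s := by positivity
  have hψK : ∀ n, ψ (zn n) ∈ s⁻¹ • K := by
    intro n
    have h1 : s • zn n ∈ Metric.ball (0 : U₁) r := by
      rw [Metric.mem_ball, dist_zero_right, norm_smul, Real.norm_eq_abs, abs_of_pos hspos]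
      calc s * ‖zn n‖ ≤ s * M := by nlinarith [hM n]
      _ < r := by
          rw [hs]
          rw [div_mul_eq_mul_div, div_lt_iff₀ (by positivity)]
          nlinarith
    have h2 : ψ (s • zn n) ∈ K := hball h1
    rw [map_smul] at h2
    refine ⟨s • ψ (zn n), h2, ?_⟩
    show s⁻¹ • s • ψ (zn n) = ψ (zn n)
    rw [smul_smul, inv_mul_cancel₀ hspos.ne', one_smul]
  have hcK : IsCompact (s⁻¹ • K) := hKc.smul s⁻¹
  by_contra hnot
  rw [Metric.tendsto_atTop] at hnot
  push_neg at hnot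
  obtain ⟨ε, hε, hfreq⟩ := hnot
  have hfreq' : ∃ᶠ n in atTop, ε ≤ dist (ψ (zn n)) (ψ z) :=
    Filter.frequently_atTop.mpr hfreq
  obtain ⟨σ, hσmono, hσ⟩ := Filter.extraction_of_frequently_atTop hfreq'
  obtain ⟨w, hwK, τ, hτmono, hτ⟩ := hcK.tendsto_subseq (fun k => hψK (σ k))
  have hwd : ε ≤ dist w (ψ z) := by
    have hdist : Filter.Tendsto (fun k => dist (ψ (zn (σ (τ k)))) (ψ z)) atTop
        (𝓝 (dist w (ψ z))) := hτ.dist tendsto_const_nhds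
    exact ge_of_tendsto hdist (Filter.Eventually.of_forall fun k => hσ (τ k))
  have hwz : w = ψ z := by
    rw [NormedSpace.eq_iff_forall_dual_eq ℝ]
    intro g
    have ht1 : Filter.Tendsto (fun k => g (ψ (zn (σ (τ k))))) atTop (𝓝 (g w)) :=
      (g.continuous.tendsto w).comp hτ
    have ht2 : Filter.Tendsto (fun k => g (ψ (zn (σ (τ k))))) atTop (𝓝 (g (ψ z))) := by
      have := (hw (g.comp ψ)).comp ((hσmono.comp hτmono).tendsto_atTop)
      simpa [Function.comp_def] using this
    exact tendsto_nhds_unique ht1 ht2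
  rw [hwz, dist_self] at hwd
  linarith

end Aux4

section Aux5

/-- For a bounded real sequence, the liminf is a cluster point. -/
lemma liminf_mapClusterPt {a : ℕ → ℝ} {B : ℝ} (h : ∀ᶠ n in atTop, |a n| ≤ B) :
    MapClusterPt (Filter.liminf a atTop) atTop a := by
  set L := Filter.liminf a atTop with hL
  have hbdd_le : Filter.IsBoundedUnder (· ≤ ·) atTop a :=
    isBoundedUnder_of_eventually (h.mono fun n hn => (abs_le.1 hn).2)
  have hbdd_ge : Filter.IsBoundedUnder (· ≥ ·) atTop a :=
    ⟨-B, Filter.eventually_map.2 (h.mono fun n hn => (abs_le.1 hn).1)⟩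
  rw [mapClusterPt_iff_frequently]
  intro s hs
  obtain ⟨ε, hε, hball⟩ := Metric.mem_nhds_iff.mp hs
  have h1 : ∃ᶠ n in atTop, a n < L + ε :=
    Filter.frequently_lt_of_liminf_lt hbdd_le.isCoboundedUnder_ge (by linarith)
  have h2 : ∀ᶠ n in atTop, L - ε < a n :=
    Filter.eventually_lt_of_lt_liminf (by linarith) hbdd_ge
  refine (h1.and_eventually h2).mono fun n hn => ?_
  apply hball
  rw [Metric.mem_ball, Real.dist_eq, abs_lt]
  exact ⟨by linarith [hn.2], by linarith [hn.1]⟩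

lemma inf_comap_neBot {a : ℕ → ℝ} {L : ℝ} (h : MapClusterPt L atTop a) :
    (atTop ⊓ Filter.comap a (𝓝 L)).NeBot := by
  rw [Filter.inf_neBot_iff]
  intro s hs t' ht'
  obtain ⟨t, ht, hsub⟩ := Filter.mem_comap.mp ht'
  have hfr : ∃ᶠ n in atTop, a n ∈ t := (mapClusterPt_iff_frequently.mp h) t ht
  obtain ⟨n, hns, hnt⟩ := Filter.frequently_iff.mp hfr hs
  exact ⟨n, hns, hsub hnt⟩

end Aux5

/-- If `ψ : U₁ → U₂` is a linear continuous compact operator between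
reflexive Banach spaces and `φ : U₂ → ℝ` is locally Lipschitz with `‖∂φ(u)‖ ≤ c_φ(1 + ‖u‖)`,
then `W(u) = ψ* ∂φ(ψ u)` is pseudomonotone. -/
theorem statement_3
    {U₁ U₂ : Type*} [NormedAddCommGroup U₁] [NormedSpace ℝ U₁] [CompleteSpace U₁]
    [NormedAddCommGroup U₂] [NormedSpace ℝ U₂] [CompleteSpace U₂]
    (hrefl₁ : Function.Surjective ⇑(NormedSpace.inclusionInDoubleDual ℝ U₁))
    (hrefl₂ : Function.Surjective ⇑(NormedSpace.inclusionInDoubleDual ℝ U₂))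
    (ψ : U₁ →L[ℝ] U₂) (hψc : IsCompactOperator (⇑ψ))
    (φ : U₂ → ℝ) (hφ : LocallyLipschitz φ)
    (cφ : ℝ) (hcφ : 0 < cφ)
    (hgrad : ∀ u : U₂, ∀ η ∈ clarkeGrad φ u, ‖η‖ ≤ cφ * (1 + ‖u‖)) :
    SetValuedPseudomonotone
      (fun u : U₁ => (fun η : StrongDual ℝ U₂ => η.comp ψ) '' clarkeGrad φ (ψ u)) := by
  classical
  -- the precomposition map on weak duals and its continuity
  set T : WeakDual ℝ U₂ → WeakDual ℝ U₁ :=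
    fun ζ => StrongDual.toWeakDual ((WeakDual.toStrongDual ζ).comp ψ) with hT
  have hTcont : Continuous T :=
    WeakDual.continuous_of_continuous_eval fun y => WeakDual.eval_continuous (ψ y)
  refine ⟨?_, ?_, ?_⟩
  · -- (i) values are nonempty, closed, bounded, convex
    intro u
    dsimp only
    set A := clarkeGrad φ (ψ u) with hA
    have hAw_closed : IsClosed (WeakDual.toStrongDual ⁻¹' A : Set (WeakDual ℝ U₂)) := by
      have hseteq : (WeakDual.toStrongDual ⁻¹' A : Set (WeakDual ℝ U₂)) =
          ⋂ w : U₂, {ζ : WeakDual ℝ U₂ | ζ w ≤ clarkeDeriv φ (ψ u) w} := by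
        ext ζ
        simp only [Set.mem_preimage, Set.mem_iInter, Set.mem_setOf_eq]
        exact Iff.rfl
      rw [hseteq]
      exact isClosed_iInter fun w =>
        IsClosed.preimage (WeakDual.eval_continuous w) isClosed_Iic
    have hAbdd : Bornology.IsBounded A := by
      have hsub : A ⊆ Metric.closedBall 0 (cφ * (1 + ‖ψ u‖)) := fun η hη => by
        rw [Metric.mem_closedBall, dist_zero_right]; exact hgrad _ η hη
      exact Metric.isBounded_closedBall.subset hsub
    have hAw_cpt : IsCompact (WeakDual.toStrongDual ⁻¹' A : Set (WeakDual ℝ U₂)) := by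
      apply WeakDual.isCompact_of_bounded_of_closed _ hAw_closed
      have hseteq : (StrongDual.toWeakDual ⁻¹'
          (WeakDual.toStrongDual ⁻¹' A : Set (WeakDual ℝ U₂))) = A := by
        ext f; exact Iff.rfl
      exact hAbdd
    have himg_closed : IsClosed (T '' (WeakDual.toStrongDual ⁻¹' A)) :=
      (hAw_cpt.image hTcont).isClosed
    have hGclosed : IsClosed ((fun η : StrongDual ℝ U₂ => η.comp ψ) '' A) := by
      have hset2 : (fun η : StrongDual ℝ U₂ => η.comp ψ) '' A =
          StrongDual.toWeakDual ⁻¹' (T '' (WeakDual.toStrongDual ⁻¹' A)) := by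
        ext f
        constructor
        · rintro ⟨η, hη, rfl⟩
          exact ⟨StrongDual.toWeakDual η, hη, rfl⟩
        · rintro ⟨ζ, hζ, hfe⟩
          exact ⟨WeakDual.toStrongDual ζ, hζ, congrArg WeakDual.toStrongDual hfe⟩
      rw [hset2]
      exact himg_closed.preimage NormedSpace.Dual.toWeakDual_continuous
    refine ⟨(clarkeGrad_nonempty φ hφ (ψ u)).image _, hGclosed, ?_, ?_⟩
    · have hsub : (fun η : StrongDual ℝ U₂ => η.comp ψ) '' A ⊆
          Metric.closedBall 0 (cφ * (1 + ‖ψ u‖) * ‖ψ‖) := by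
        rintro f ⟨η, hη, rfl⟩
        rw [Metric.mem_closedBall, dist_zero_right]
        calc ‖η.comp ψ‖ ≤ ‖η‖ * ‖ψ‖ := ContinuousLinearMap.opNorm_comp_le _ _
        _ ≤ cφ * (1 + ‖ψ u‖) * ‖ψ‖ :=
            mul_le_mul_of_nonneg_right (hgrad _ η hη) (norm_nonneg ψ)
      exact Metric.isBounded_closedBall.subset hsub
    · have hconv : Convex ℝ A := by
        intro η₁ h₁ η₂ h₂ s t hs ht hst
        intro w
        have hap : ((s • η₁ + t • η₂ : StrongDual ℝ U₂)) w
            = s * η₁ w + t * η₂ w := by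
          simp [ContinuousLinearMap.add_apply, ContinuousLinearMap.smul_apply, smul_eq_mul]
        rw [hap]
        calc s * η₁ w + t * η₂ w
            ≤ s * clarkeDeriv φ (ψ u) w + t * clarkeDeriv φ (ψ u) w :=
              add_le_add (mul_le_mul_of_nonneg_left (h₁ w) hs)
                (mul_le_mul_of_nonneg_left (h₂ w) ht)
        _ = clarkeDeriv φ (ψ u) w := by rw [← add_mul, hst, one_mul]
      let L : StrongDual ℝ U₂ →ₗ[ℝ] StrongDual ℝ U₁ :=
        { toFun := fun η => η.comp ψ
          map_add' := fun a b => by ext y; simp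
          map_smul' := fun c a => by ext y; simp }
      exact hconv.linear_image L
  · -- (ii) upper semicontinuity on finite dimensional subspaces
    intro H _ u O hO hmemO
    by_contra hcon
    push_neg at hcon
    have hsel : ∀ n : ℕ, ∃ v : H, v ∈ Metric.ball u (1/(n+1)) ∧
        ∃ η ∈ clarkeGrad φ (ψ (v : U₁)),
          StrongDual.toWeakDual (η.comp ψ) ∉ O := by
      intro n
      obtain ⟨v, hvU, f, hf, hfO⟩ :=
        hcon (Metric.ball u (1/(n+1))) Metric.isOpen_ball
          (Metric.mem_ball_self (by positivity))
      obtain ⟨η, hη, rfl⟩ := hf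
      exact ⟨v, hvU, η, hη, hfO⟩
    choose vs hvball ηs hηmem hηO using hsel
    have hvtend : Tendsto (fun n => ((vs n : H) : U₁)) atTop (𝓝 ((u : H) : U₁)) := by
      have hd : Tendsto (fun n => dist (vs n) u) atTop (𝓝 0) := by
        apply squeeze_zero (fun n => dist_nonneg) (fun n => (hvball n).le)
        exact tendsto_one_div_add_atTop_nhds_zero_nat
      have h1 : Tendsto vs atTop (𝓝 u) := tendsto_iff_dist_tendsto_zero.mpr hd
      exact (continuous_subtype_val.tendsto u).comp h1
    have hψtend : Tendsto (fun n => ψ ((vs n : H) : U₁)) atTop (𝓝 (ψ ((u : H) : U₁))) :=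
      (ψ.continuous.tendsto _).comp hvtend
    have hbound : ∀ᶠ n in atTop, ‖ηs n‖ ≤ cφ * (1 + (‖ψ ((u : H) : U₁)‖ + 1)) := by
      have hev : ∀ᶠ n in atTop, ‖ψ ((vs n : H) : U₁)‖ ≤ ‖ψ ((u : H) : U₁)‖ + 1 :=
        hψtend.norm.eventually_le_const (by linarith)
      filter_upwards [hev] with n hn
      calc ‖ηs n‖ ≤ cφ * (1 + ‖ψ ((vs n : H) : U₁)‖) := hgrad _ _ (hηmem n)
      _ ≤ cφ * (1 + (‖ψ ((u : H) : U₁)‖ + 1)) := by nlinarith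
    obtain ⟨η₀, hcl⟩ := exists_weak_cluster ηs hbound
    have hη₀ : η₀ ∈ clarkeGrad φ (ψ ((u : H) : U₁)) :=
      clarkeGrad_cluster φ hφ hψtend hηmem hcl
    have hmem₀ : StrongDual.toWeakDual (η₀.comp ψ) ∈ O :=
      hmemO _ ⟨η₀, hη₀, rfl⟩
    have hclT : MapClusterPt (T (StrongDual.toWeakDual η₀)) atTop
        (fun n => T (StrongDual.toWeakDual (ηs n))) :=
      hcl.continuousAt_comp hTcont.continuousAt
    have hfr : ∃ᶠ n in atTop,
        T (StrongDual.toWeakDual (ηs n)) ∈ O :=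
      (mapClusterPt_iff_frequently.mp hclT) O (hO.mem_nhds hmem₀)
    obtain ⟨n, hn⟩ := hfr.exists
    exact hηO n hn
  · -- (iii) generalized pseudomonotonicity
    intro zn z zs hweak hzs _ x
    have hzs' : ∀ n, ∃ η ∈ clarkeGrad φ (ψ (zn n)), η.comp ψ = zs n := fun n => hzs n
    choose ηn hηmem hηeq using hzs'
    have hψt : Tendsto (fun n => ψ (zn n)) atTop (𝓝 (ψ z)) := compact_tendsto ψ hψc hweak
    have hbound : ∀ᶠ n in atTop, ‖ηn n‖ ≤ cφ * (1 + (‖ψ z‖ + 1)) := by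
      have hev : ∀ᶠ n in atTop, ‖ψ (zn n)‖ ≤ ‖ψ z‖ + 1 :=
        hψt.norm.eventually_le_const (by linarith)
      filter_upwards [hev] with n hn
      calc ‖ηn n‖ ≤ cφ * (1 + ‖ψ (zn n)‖) := hgrad _ _ (hηmem n)
      _ ≤ cφ * (1 + (‖ψ z‖ + 1)) := by nlinarith
    set R : ℝ := cφ * (1 + (‖ψ z‖ + 1)) with hR
    have haeq : ∀ n, zs n (zn n - x) = ηn n (ψ (zn n) - ψ x) := by
      intro n
      rw [← hηeq n]
      show (ηn n) (ψ (zn n - x)) = (ηn n) (ψ (zn n) - ψ x)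
      rw [map_sub]
    -- boundedness of the sequence of real numbers
    have hψbd : ∀ᶠ n in atTop, ‖ψ (zn n)‖ ≤ ‖ψ z‖ + 1 :=
      hψt.norm.eventually_le_const (by linarith)
    have habs : ∀ᶠ n in atTop, |(fun n => zs n (zn n - x)) n| ≤
        R * (‖ψ z‖ + 1 + ‖ψ x‖) := by
      filter_upwards [hbound, hψbd] with n h1 h2
      rw [haeq n]
      have hRnn : (0:ℝ) ≤ R := by positivity
      calc |ηn n (ψ (zn n) - ψ x)| ≤ ‖ηn n‖ * ‖ψ (zn n) - ψ x‖ :=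
            (ηn n).le_opNorm _
      _ ≤ R * (‖ψ z‖ + 1 + ‖ψ x‖) := by
          apply mul_le_mul h1 _ (norm_nonneg _) hRnn
          calc ‖ψ (zn n) - ψ x‖ ≤ ‖ψ (zn n)‖ + ‖ψ x‖ := norm_sub_le _ _
          _ ≤ ‖ψ z‖ + 1 + ‖ψ x‖ := by linarith
    set L : ℝ := Filter.liminf (fun n => zs n (zn n - x)) atTop with hLdef
    have hLcl : MapClusterPt L atTop (fun n => zs n (zn n - x)) :=
      liminf_mapClusterPt habs
    set l : Filter ℕ := atTop ⊓ Filter.comap (fun n => zs n (zn n - x)) (𝓝 L) with hl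
    haveI hlne : l.NeBot := inf_comap_neBot hLcl
    have hal : Tendsto (fun n => zs n (zn n - x)) l (𝓝 L) :=
      tendsto_comap.mono_left inf_le_right
    have hψl : Tendsto (fun n => ψ (zn n)) l (𝓝 (ψ z)) := hψt.mono_left inf_le_left
    obtain ⟨η₀, hcl⟩ := exists_weak_cluster (l := l) ηn (hbound.filter_mono inf_le_left)
    have hη₀ : η₀ ∈ clarkeGrad φ (ψ z) := clarkeGrad_cluster φ hφ hψl hηmem hcl
    -- the evaluations ηn n (ψ z - ψ x) converge to L along l
    have hterm : Tendsto (fun n => ηn n (ψ (zn n) - ψ z)) atTop (𝓝 0) := by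
      apply squeeze_zero_norm' (a := fun n => R * ‖ψ (zn n) - ψ z‖)
      · filter_upwards [hbound] with n h1
        calc ‖ηn n (ψ (zn n) - ψ z)‖ ≤ ‖ηn n‖ * ‖ψ (zn n) - ψ z‖ := (ηn n).le_opNorm _
        _ ≤ R * ‖ψ (zn n) - ψ z‖ := mul_le_mul_of_nonneg_right h1 (norm_nonneg _)
      · have h2 : Tendsto (fun n => ‖ψ (zn n) - ψ z‖) atTop (𝓝 0) := by
          have := (hψt.sub (tendsto_const_nhds (x := ψ z))).norm
          simpa using this
        simpa using h2.const_mul R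
    have hbtend : Tendsto (fun n => ηn n (ψ z - ψ x)) l (𝓝 L) := by
      have hident : (fun n => ηn n (ψ z - ψ x)) =
          fun n => zs n (zn n - x) - ηn n (ψ (zn n) - ψ z) := by
        funext n
        rw [haeq n, ← map_sub (ηn n)]
        congr 1
        abel
      rw [hident]
      have := hal.sub (hterm.mono_left (inf_le_left : l ≤ atTop))
      simpa using this
    have hbcl : MapClusterPt (η₀ (ψ z - ψ x)) l (fun n => ηn n (ψ z - ψ x)) := by
      have hc : ContinuousAt (fun ζ : WeakDual ℝ U₂ => ζ (ψ z - ψ x))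
          (StrongDual.toWeakDual η₀) :=
        (WeakDual.eval_continuous (ψ z - ψ x)).continuousAt
      exact hcl.continuousAt_comp hc
    have heq : η₀ (ψ z - ψ x) = L := by
      have h1 : (𝓝 (η₀ (ψ z - ψ x)) ⊓ Filter.map (fun n => ηn n (ψ z - ψ x)) l).NeBot :=
        hbcl
      have h2 : (𝓝 (η₀ (ψ z - ψ x)) ⊓ 𝓝 L).NeBot :=
        h1.mono (inf_le_inf_left _ hbtend)
      exact eq_of_nhds_neBot h2
    refine ⟨η₀.comp ψ, ⟨η₀, hη₀, rfl⟩, ?_⟩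
    have hfin : (η₀.comp ψ) (z - x) = η₀ (ψ z - ψ x) := by
      show η₀ (ψ (z - x)) = η₀ (ψ z - ψ x)
      rw [map_sub]
    rw [hfin, heq]
end

section
/- Let Z₂ and Y be real Banach spaces, A₀ : Z₂ → Z₂* a strongly monotone operator with constant m_A > 0, N : Z₂ → Y a continuous linear operator with adjoint N* (N*η = η ∘ N), and J₀ : Y → ℝ a locally Lipschitz functional such that there exists c_J > 0 with ⟨θ₁ − θ₂, w₁ − w₂⟩ ≥ −c_J ‖w₁ − w₂‖_Y² for all θᵢ ∈ ∂J₀(wᵢ), wᵢ ∈ Y (i = 1,2). Assume m_A > c_J ‖N‖². If y₁, y₂ ∈ Z₂ and g₁, g₂ ∈ Z₂* satisfy gᵢ − A₀ yᵢ ∈ N* ∂J₀(N yᵢ) for i = 1, 2, then ‖y₁ − y₂‖_{Z₂} ≤ ‖g₁ − g₂‖_{Z₂*} / (m_A − c_J ‖N‖²). In particular, for each g ∈ Z₂* the inclusion A₀ y + N* ∂J₀(N y) ∋ g has at most one solution y ∈ Z₂. -/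
open Filter Topology NormedSpace

/-- Stability and uniqueness for the inclusion
`A₀ y + N* ∂J₀(N y) ∋ g`: if `A₀` is strongly monotone with constant `m_A`, `J₀` is locally
Lipschitz with relaxed monotone gradient (constant `c_J`) and `m_A > c_J ‖N‖²`, then any two
solutions corresponding to right-hand sides `g₁, g₂` satisfy
`‖y₁ - y₂‖ ≤ ‖g₁ - g₂‖ / (m_A - c_J ‖N‖²)`; in particular solutions are unique. -/
theorem statement_6
    {Z₂ Y : Type*} [NormedAddCommGroup Z₂] [NormedSpace ℝ Z₂]
    [NormedAddCommGroup Y] [NormedSpace ℝ Y]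
    (A₀ : Z₂ → StrongDual ℝ Z₂) (mA : ℝ) (hmA : 0 < mA)
    (hAsm : ∀ y₁ y₂ : Z₂, mA * ‖y₁ - y₂‖ ^ 2 ≤ (A₀ y₁ - A₀ y₂) (y₁ - y₂))
    (N : Z₂ →L[ℝ] Y)
    (J₀ : Y → ℝ) (hJ₀ : LocallyLipschitz J₀)
    (cJ : ℝ) (hcJ : 0 < cJ)
    (hJrel : ∀ w₁ w₂ : Y, ∀ θ₁ ∈ clarkeGrad J₀ w₁, ∀ θ₂ ∈ clarkeGrad J₀ w₂,
      -(cJ * ‖w₁ - w₂‖ ^ 2) ≤ (θ₁ - θ₂) (w₁ - w₂))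
    (hO : cJ * ‖N‖ ^ 2 < mA) :
    (∀ (y₁ y₂ : Z₂) (g₁ g₂ : StrongDual ℝ Z₂),
      g₁ - A₀ y₁ ∈ (fun η : StrongDual ℝ Y => η.comp N) '' clarkeGrad J₀ (N y₁) →
      g₂ - A₀ y₂ ∈ (fun η : StrongDual ℝ Y => η.comp N) '' clarkeGrad J₀ (N y₂) →
      ‖y₁ - y₂‖ ≤ ‖g₁ - g₂‖ / (mA - cJ * ‖N‖ ^ 2)) ∧
    (∀ (g : StrongDual ℝ Z₂) (y₁ y₂ : Z₂),
      g - A₀ y₁ ∈ (fun η : StrongDual ℝ Y => η.comp N) '' clarkeGrad J₀ (N y₁) →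
      g - A₀ y₂ ∈ (fun η : StrongDual ℝ Y => η.comp N) '' clarkeGrad J₀ (N y₂) →
      y₁ = y₂) := by
  have key : ∀ (y₁ y₂ : Z₂) (g₁ g₂ : StrongDual ℝ Z₂),
      g₁ - A₀ y₁ ∈ (fun η : StrongDual ℝ Y => η.comp N) '' clarkeGrad J₀ (N y₁) →
      g₂ - A₀ y₂ ∈ (fun η : StrongDual ℝ Y => η.comp N) '' clarkeGrad J₀ (N y₂) →
      ‖y₁ - y₂‖ ≤ ‖g₁ - g₂‖ / (mA - cJ * ‖N‖ ^ 2) := by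
    intro y₁ y₂ g₁ g₂ h₁ h₂
    obtain ⟨θ₁, hθ₁, hc₁⟩ := h₁
    obtain ⟨θ₂, hθ₂, hc₂⟩ := h₂
    have hden : 0 < mA - cJ * ‖N‖ ^ 2 := by linarith
    -- main inequality
    have hNle : ‖N (y₁ - y₂)‖ ^ 2 ≤ ‖N‖ ^ 2 * ‖y₁ - y₂‖ ^ 2 := by
      calc ‖N (y₁ - y₂)‖ ^ 2 ≤ (‖N‖ * ‖y₁ - y₂‖) ^ 2 :=
            pow_le_pow_left₀ (norm_nonneg _) (N.le_opNorm _) 2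
        _ = ‖N‖ ^ 2 * ‖y₁ - y₂‖ ^ 2 := by ring
    have hrel := hJrel (N y₁) (N y₂) θ₁ hθ₁ θ₂ hθ₂
    have hA := hAsm y₁ y₂
    have hg : (g₁ - g₂) (y₁ - y₂)
        = (A₀ y₁ - A₀ y₂) (y₁ - y₂) + (θ₁ - θ₂) (N y₁ - N y₂) := by
      have e₁ : g₁ (y₁ - y₂) = A₀ y₁ (y₁ - y₂) + θ₁ (N (y₁ - y₂)) := by
        have := congrArg (fun f : StrongDual ℝ Z₂ => f (y₁ - y₂)) hc₁
        simp only [ContinuousLinearMap.sub_apply, ContinuousLinearMap.comp_apply] at this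
        linarith
      have e₂ : g₂ (y₁ - y₂) = A₀ y₂ (y₁ - y₂) + θ₂ (N (y₁ - y₂)) := by
        have := congrArg (fun f : StrongDual ℝ Z₂ => f (y₁ - y₂)) hc₂
        simp only [ContinuousLinearMap.sub_apply, ContinuousLinearMap.comp_apply] at this
        linarith
      simp only [ContinuousLinearMap.sub_apply, ← map_sub]
      rw [e₁, e₂]; ring
    have hNeq : N y₁ - N y₂ = N (y₁ - y₂) := (map_sub N y₁ y₂).symm
    have hNnorm : ‖N y₁ - N y₂‖ = ‖N (y₁ - y₂)‖ := by rw [hNeq]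
    have hlow : (mA - cJ * ‖N‖ ^ 2) * ‖y₁ - y₂‖ ^ 2 ≤ (g₁ - g₂) (y₁ - y₂) := by
      rw [hg]
      have : -(cJ * ‖N y₁ - N y₂‖ ^ 2) ≤ (θ₁ - θ₂) (N y₁ - N y₂) := hrel
      rw [hNnorm] at this
      set p := (A₀ y₁ - A₀ y₂) (y₁ - y₂)
      set q := (θ₁ - θ₂) (N (y₁ - y₂))
      nlinarith
    have hup : (g₁ - g₂) (y₁ - y₂) ≤ ‖g₁ - g₂‖ * ‖y₁ - y₂‖ := by
      calc (g₁ - g₂) (y₁ - y₂) ≤ ‖(g₁ - g₂) (y₁ - y₂)‖ := le_abs_self _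
        _ ≤ ‖g₁ - g₂‖ * ‖y₁ - y₂‖ := (g₁ - g₂).le_opNorm _
    have hchain : (mA - cJ * ‖N‖ ^ 2) * ‖y₁ - y₂‖ ^ 2 ≤ ‖g₁ - g₂‖ * ‖y₁ - y₂‖ :=
      le_trans hlow hup
    rw [le_div_iff₀ hden]
    rcases eq_or_lt_of_le (norm_nonneg (y₁ - y₂)) with h0 | h0
    · rw [← h0, zero_mul]; exact norm_nonneg _
    · rw [show (mA - cJ * ‖N‖ ^ 2) * ‖y₁ - y₂‖ ^ 2
          = (mA - cJ * ‖N‖ ^ 2) * ‖y₁ - y₂‖ * ‖y₁ - y₂‖ from by ring] at hchain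
      rw [mul_comm]
      exact le_of_mul_le_mul_right hchain h0
  refine ⟨key, fun g y₁ y₂ h₁ h₂ => ?_⟩
  have := key y₁ y₂ g g h₁ h₂
  simp only [sub_self, norm_zero, zero_div] at this
  have : ‖y₁ - y₂‖ = 0 := le_antisymm this (norm_nonneg _)
  have := norm_sub_eq_zero_iff.mp this
  exact this
end
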